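/- arXiv:2412.05109 — 6 statements merged into one kernel-verified Lean document; each statement's English description precedes it below -/
import Mathlib

section
/- For every x ∈ ℝ^m, the sum over all n ∈ ℤ^m of φ(x − n) equals 1, where φ is the spike function; i.e., the integer translates of the spike function form a partition of unity on ℝ^m. -/
/-- The spike function `φ(x) = max{1 + min{x₁,...,x_m,0} − max{x₁,...,x_m,0}, 0}`. -/
noncomputable def spike (m : ℕ) (x : Fin m → ℝ) : ℝ :=
  max (1 + min (⨅ i, x i) 0 - max (⨆ i, x i) 0) 0

lemma spike_eq_zero_of_ge {m : ℕ} {x : Fin m → ℝ} (i : Fin m) (h : 1 ≤ x i) :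
    spike m x = 0 := by
  have h1 : x i ≤ ⨆ j, x j := le_ciSup (Set.Finite.bddAbove (Set.finite_range x)) i
  have h2 : min (⨅ j, x j) 0 ≤ 0 := min_le_right _ _
  have h3 : (⨆ j, x j) ≤ max (⨆ j, x j) 0 := le_max_left _ _
  exact max_eq_right (by linarith)

lemma spike_eq_zero_of_le {m : ℕ} {x : Fin m → ℝ} (i : Fin m) (h : x i ≤ -1) :
    spike m x = 0 := by
  have h1 : (⨅ j, x j) ≤ x i := ciInf_le (Set.Finite.bddBelow (Set.finite_range x)) i
  have h2 : min (⨅ j, x j) 0 ≤ ⨅ j, x j := min_le_left _ _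
  have h3 : (0 : ℝ) ≤ max (⨆ j, x j) 0 := le_max_right _ _
  exact max_eq_right (by linarith)

lemma min_iInf_cons {m : ℕ} (t : ℝ) (y : Fin m → ℝ) :
    min (⨅ i, (Fin.cons t y : Fin (m + 1) → ℝ) i) 0
      = min (min (⨅ i, y i) 0) (min t 0) := by
  have hbb : ∀ (k : ℕ) (g : Fin k → ℝ), BddBelow (Set.range g) :=
    fun k g => Set.Finite.bddBelow (Set.finite_range g)
  apply le_antisymm
  · refine le_min (le_min ?_ (min_le_right _ _)) (le_min ?_ (min_le_right _ _))
    · cases isEmpty_or_nonempty (Fin m) with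
      | inl h => rw [Real.iInf_of_isEmpty y]; exact min_le_right _ _
      | inr h =>
        refine le_trans (min_le_left _ _) (le_ciInf fun j => ?_)
        have := ciInf_le (hbb _ (Fin.cons t y)) (Fin.succ j)
        simpa using this
    · refine le_trans (min_le_left _ _) ?_
      have := ciInf_le (hbb _ (Fin.cons t y)) 0
      simpa using this
  · refine le_min (le_ciInf fun i => ?_) (le_trans (min_le_right _ _) (min_le_right _ _))
    refine Fin.cases ?_ (fun j => ?_) i
    · simpa using le_trans (min_le_right _ _) (min_le_left _ _)
    · simp only [Fin.cons_succ]
      exact le_trans (min_le_left _ _)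
        (le_trans (min_le_left _ _) (ciInf_le (hbb _ y) j))

lemma max_iSup_cons {m : ℕ} (t : ℝ) (y : Fin m → ℝ) :
    max (⨆ i, (Fin.cons t y : Fin (m + 1) → ℝ) i) 0
      = max (max (⨆ i, y i) 0) (max t 0) := by
  have hbb : ∀ (k : ℕ) (g : Fin k → ℝ), BddAbove (Set.range g) :=
    fun k g => Set.Finite.bddAbove (Set.finite_range g)
  apply le_antisymm
  · refine max_le (ciSup_le fun i => ?_) (le_max_of_le_left (le_max_right _ _))
    refine Fin.cases ?_ (fun j => ?_) i
    · simpa using le_trans (le_max_left _ _) (le_max_right _ _)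
    · simp only [Fin.cons_succ]
      exact le_trans (le_ciSup (hbb _ y) j)
        (le_trans (le_max_left _ _) (le_max_left _ _))
  · refine max_le (max_le ?_ (le_max_right _ _)) (max_le ?_ (le_max_right _ _))
    · cases isEmpty_or_nonempty (Fin m) with
      | inl h => rw [Real.iSup_of_isEmpty y]; exact le_max_right _ _
      | inr h =>
        refine le_trans (ciSup_le fun j => ?_) (le_max_left _ _)
        have := le_ciSup (hbb _ (Fin.cons t y)) (Fin.succ j)
        simpa using this
    · refine le_trans ?_ (le_max_left _ _)
      have := le_ciSup (hbb _ (Fin.cons t y)) (0 : Fin (m + 1))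
      simpa using this

/-- The key algebraic identity. -/
lemma key_minmax (p q : ℝ) :
    max (min (p + q) p) 0 + max (min (p + q) q) 0 = max (p + q) 0 := by
  rcases le_total p 0 with hp | hp <;> rcases le_total q 0 with hq | hq <;>
    rcases le_total (p + q) 0 with hpq | hpq <;>
    simp only [min_def, max_def] <;> split_ifs <;> linarith

/-- Two consecutive translates in one coordinate collapse. -/
lemma spike_cons_pair {m : ℕ} (u : ℝ) (hu0 : 0 ≤ u) (hu1 : u < 1) (y : Fin m → ℝ) :
    spike (m + 1) (Fin.cons u y) + spike (m + 1) (Fin.cons (u - 1) y) = spike m y := by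
  have ha : min (⨅ i, y i) 0 ≤ 0 := min_le_right _ _
  have hb : (0 : ℝ) ≤ max (⨆ i, y i) 0 := le_max_right _ _
  set a := min (⨅ i, y i) 0 with ha'
  set b := max (⨆ i, y i) 0 with hb'
  have h1 : spike (m + 1) (Fin.cons u y) = max (min (1 + a - b) (1 + a - u)) 0 := by
    rw [spike, min_iInf_cons, max_iSup_cons, ← ha', ← hb']
    congr 1
    rw [min_eq_right hu0, max_eq_left hu0, min_eq_left ha]
    rcases le_total b u with h | h <;> simp [min_def, max_def, h] <;> intro <;> linarith
  have h2 : spike (m + 1) (Fin.cons (u - 1) y) = max (min (1 + a - b) (u - b)) 0 := by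
    rw [spike, min_iInf_cons, max_iSup_cons, ← ha', ← hb']
    congr 1
    have hu1' : u - 1 ≤ 0 := by linarith
    rw [min_eq_left hu1', max_eq_right hu1', max_eq_left hb]
    rcases le_total a (u - 1) with h | h <;> simp [min_def, max_def, h] <;>
      intro <;> linarith
  have := key_minmax (1 + a - u) (u - b)
  have harith : (1 + a - u) + (u - b) = 1 + a - b := by ring
  rw [harith] at this
  rw [h1, h2, spike, ← ha', ← hb']
  linarith [this]

/-- Summing over all integer translates of one cons coordinate collapses the spike. -/
lemma spike_cons_tsum {m : ℕ} (t : ℝ) (y : Fin m → ℝ) :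
    ∑' k : ℤ, spike (m + 1) (Fin.cons (t - (k : ℝ)) y) = spike m y := by
  set G : ℤ → ℝ := fun k => spike (m + 1) (Fin.cons (t - (k : ℝ)) y) with hG
  have hshift : ∑' k : ℤ, G k = ∑' k : ℤ, G (k + ⌊t⌋) := ((Equiv.addRight (⌊t⌋ : ℤ)).tsum_eq G).symm
  set u := Int.fract t with hu
  have hu0 : 0 ≤ u := Int.fract_nonneg t
  have hu1 : u < 1 := Int.fract_lt_one t
  have hGk : ∀ k : ℤ, G (k + ⌊t⌋) = spike (m + 1) (Fin.cons (u - (k : ℝ)) y) := by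
    intro k
    have : t - ((k + ⌊t⌋ : ℤ) : ℝ) = u - (k : ℝ) := by
      rw [hu, Int.fract]; push_cast; ring
    rw [hG]; simp only []
    rw [this]
  have hzero : ∀ k : ℤ, k ∉ ({0, 1} : Finset ℤ) → spike (m + 1) (Fin.cons (u - (k : ℝ)) y) = 0 := by
    intro k hk
    simp only [Finset.mem_insert, Finset.mem_singleton] at hk
    push_neg at hk
    rcases lt_or_ge k 0 with h | h
    · have hk1 : (k : ℝ) ≤ -1 := by exact_mod_cast Int.le_sub_one_of_lt h
      refine spike_eq_zero_of_ge 0 ?_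
      rw [Fin.cons_zero]; linarith
    · have hk2 : (2 : ℝ) ≤ (k : ℝ) := by
        have : 2 ≤ k := by omega
        exact_mod_cast this
      refine spike_eq_zero_of_le 0 ?_
      rw [Fin.cons_zero]; linarith
  calc ∑' k : ℤ, G k = ∑' k : ℤ, spike (m + 1) (Fin.cons (u - (k : ℝ)) y) := by
        rw [hshift]; exact tsum_congr hGk
    _ = ∑ k ∈ ({0, 1} : Finset ℤ), spike (m + 1) (Fin.cons (u - (k : ℝ)) y) :=
        tsum_eq_sum hzero
    _ = spike m y := by
        rw [Finset.sum_insert (by decide), Finset.sum_singleton]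
        push_cast
        rw [sub_zero]
        exact spike_cons_pair u hu0 hu1 y

lemma spike_summable {m : ℕ} (x : Fin m → ℝ) :
    Summable (fun n : Fin m → ℤ => spike m (fun i => x i - (n i : ℝ))) := by
  refine summable_of_ne_finset_zero
    (s := Fintype.piFinset (fun i => Finset.Icc (⌈x i⌉ - 1) (⌊x i⌋ + 1))) ?_
  intro n hn
  rw [Fintype.mem_piFinset] at hn
  push_neg at hn
  obtain ⟨i, hi⟩ := hn
  rw [Finset.mem_Icc] at hi
  push_neg at hi
  rcases lt_or_ge (n i) (⌈x i⌉ - 1) with h | h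
  · have h' : (n i : ℝ) ≤ x i - 1 := by
      have h1 : n i ≤ ⌈x i⌉ - 2 := by omega
      have h2 : (⌈x i⌉ : ℝ) < x i + 1 := Int.ceil_lt_add_one _
      have : ((n i : ℤ) : ℝ) ≤ ((⌈x i⌉ - 2 : ℤ) : ℝ) := by exact_mod_cast h1
      push_cast at this
      linarith
    exact spike_eq_zero_of_ge i (by linarith)
  · have h2 := hi h
    have h' : x i + 1 ≤ (n i : ℝ) := by
      have h1 : ⌊x i⌋ + 2 ≤ n i := by omega
      have h3 : x i - 1 < (⌊x i⌋ : ℝ) := Int.sub_one_lt_floor _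
      have : ((⌊x i⌋ + 2 : ℤ) : ℝ) ≤ ((n i : ℤ) : ℝ) := by exact_mod_cast h1
      push_cast at this
      linarith
    exact spike_eq_zero_of_le i (by linarith)

set_option maxHeartbeats 1000000 in
lemma spike_partition_aux (m : ℕ) (x : Fin m → ℝ) :
    ∑' n : Fin m → ℤ, spike m (fun i => x i - (n i : ℝ)) = 1 := by
  induction m with
  | zero =>
    have : ∀ n : Fin 0 → ℤ, spike 0 (fun i => x i - (n i : ℝ)) = 1 := by
      intro n
      rw [spike, Real.iInf_of_isEmpty, Real.iSup_of_isEmpty]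
      norm_num
    rw [tsum_eq_single (fun _ => 0) (fun b hb => absurd (Subsingleton.elim b _) hb), this]
  | succ m ih =>
    set F : (Fin (m + 1) → ℤ) → ℝ := fun n => spike (m + 1) (fun i => x i - (n i : ℝ)) with hF
    have hsum : Summable F := spike_summable x
    set e : (Fin m → ℤ) × ℤ ≃ (Fin (m + 1) → ℤ) :=
      (Equiv.prodComm (Fin m → ℤ) ℤ).trans (Fin.consEquiv fun _ => ℤ) with he
    have he' : ∀ (n : Fin m → ℤ) (k : ℤ), e (n, k) = Fin.cons k n := fun n k => rfl
    have hsum2 : Summable (F ∘ e) := e.summable_iff.mpr hsum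
    have hdecomp : ∀ (n : Fin m → ℤ) (k : ℤ),
        F (e (n, k)) = spike (m + 1) (Fin.cons (x 0 - (k : ℝ)) (fun j => x j.succ - (n j : ℝ))) := by
      intro n k
      rw [he', hF]
      have harg : (fun i => x i - ((Fin.cons k n : Fin (m + 1) → ℤ) i : ℝ))
          = Fin.cons (x 0 - (k : ℝ)) (fun j => x j.succ - (n j : ℝ)) := by
        funext i
        refine Fin.cases ?_ (fun j => ?_) i <;> simp
      exact congrArg (spike (m + 1)) harg
    calc ∑' n : Fin (m + 1) → ℤ, F n = ∑' p : (Fin m → ℤ) × ℤ, F (e p) := (e.tsum_eq F).symm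
      _ = ∑' (n : Fin m → ℤ), ∑' (k : ℤ), F (e (n, k)) := Summable.tsum_prod hsum2
      _ = ∑' (n : Fin m → ℤ), spike m (fun j => x j.succ - (n j : ℝ)) := by
            refine tsum_congr fun n => ?_
            rw [tsum_congr (fun k => hdecomp n k)]
            exact spike_cons_tsum (x 0) _
      _ = 1 := ih (fun j => x j.succ)

/-- The integer translates of the spike function form a partition of unity on `ℝ^m`:
`∑_{n ∈ ℤ^m} φ(x − n) = 1` for every `x ∈ ℝ^m`. -/
theorem spike_partition_of_unity (m : ℕ) (hm : 0 < m) (x : Fin m → ℝ) :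
    ∑' n : Fin m → ℤ, spike m (fun i => x i - (n i : ℝ)) = 1 :=
  spike_partition_aux m x
end

section
/- Let S = {x ∈ [0,1]^m : x₁ ≥ x₂ ≥ ⋯ ≥ x_m} and let M = {0, e₁, e₁+e₂, ..., e₁+⋯+e_m} ⊆ ℕ₀^m. Then for all x ∈ S: φ(x − n) = 0 for every n ∈ ℕ₀^m \ M; moreover φ(x) = 1 − x₁, φ(x − e₁ − ⋯ − e_k) = x_k − x_{k+1} for k = 1,...,m−1, and φ(x − e₁ − ⋯ − e_m) = x_m. -/
/-- The lattice point `e₁ + ⋯ + e_k ∈ ℕ₀^m` (equal to `0` for `k = 0`). -/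
def stepVec (m k : ℕ) : Fin m → ℕ := fun i => if (i : ℕ) < k then 1 else 0

private lemma mySup {m : ℕ} (y : Fin m → ℝ) (j : Fin m) (h : ∀ i, y i ≤ y j) :
    (⨆ i, y i) = y j :=
  have : Nonempty (Fin m) := ⟨j⟩
  le_antisymm (ciSup_le h) (le_ciSup (Set.finite_range y).bddAbove j)

private lemma myInf {m : ℕ} (y : Fin m → ℝ) (j : Fin m) (h : ∀ i, y j ≤ y i) :
    (⨅ i, y i) = y j :=
  have : Nonempty (Fin m) := ⟨j⟩
  le_antisymm (ciInf_le (Set.finite_range y).bddBelow j) (le_ciInf h)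

/-- On the simplex `S = {x ∈ [0,1]^m : x₁ ≥ ⋯ ≥ x_m}`, the translates of the spike
function vanish except for shifts in `M = {0, e₁, e₁+e₂, ..., e₁+⋯+e_m}`, and on those
shifts they reproduce the barycentric-type coordinates. -/
theorem spike_on_simplex (m : ℕ) (hm : 0 < m) (x : Fin m → ℝ)
    (hx01 : ∀ i, x i ∈ Set.Icc (0 : ℝ) 1)
    (hxmono : ∀ i j : Fin m, i ≤ j → x j ≤ x i) :
    (∀ n : Fin m → ℕ, (¬ ∃ k ≤ m, n = stepVec m k) →
        spike m (fun i => x i - (n i : ℝ)) = 0) ∧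
    spike m x = 1 - x ⟨0, hm⟩ ∧
    (∀ k : ℕ, ∀ _hk1 : 1 ≤ k, ∀ _hk2 : k < m,
        spike m (fun i => x i - (stepVec m k i : ℝ)) =
          x ⟨k - 1, by omega⟩ - x ⟨k, by omega⟩) ∧
    spike m (fun i => x i - (stepVec m m i : ℝ)) = x ⟨m - 1, by omega⟩ := by
  have hne : Nonempty (Fin m) := ⟨⟨0, hm⟩⟩
  refine ⟨?_, ?_, ?_, ?_⟩
  · intro n hn
    set y : Fin m → ℝ := fun i => x i - (n i : ℝ) with hy
    by_cases h2 : ∃ i, 2 ≤ n i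
    · obtain ⟨i, hi⟩ := h2
      have h2r : (2 : ℝ) ≤ (n i : ℝ) := by exact_mod_cast hi
      have hyi : y i ≤ -1 := by
        have := (hx01 i).2; simp only [hy]; linarith
      have ha : (⨅ j, y j) ≤ y i := ciInf_le (Set.finite_range y).bddBelow i
      unfold spike
      apply max_eq_right
      have h1 : min (⨅ j, y j) 0 ≤ -1 := le_trans (min_le_left _ _) (le_trans ha hyi)
      have h2 : (0:ℝ) ≤ max (⨆ j, y j) 0 := le_max_right _ _
      linarith
    · have h1 : ∀ i, n i ≤ 1 := by
        intro i; by_contra h; exact h2 ⟨i, by omega⟩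
      by_cases hmon : ∃ i j : Fin m, i < j ∧ n i < n j
      · obtain ⟨i, j, hij, hnij⟩ := hmon
        have hx := hxmono i j (le_of_lt hij)
        have hnr : (n i : ℝ) + 1 ≤ (n j : ℝ) := by exact_mod_cast hnij
        have hd : y j ≤ y i - 1 := by simp only [hy]; linarith
        have ha : (⨅ k, y k) ≤ y j := ciInf_le (Set.finite_range y).bddBelow j
        have hb : y i ≤ (⨆ k, y k) := le_ciSup (Set.finite_range y).bddAbove i
        unfold spike
        apply max_eq_right
        have ha' : min (⨅ k, y k) 0 ≤ y j := le_trans (min_le_left _ _) ha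
        have hb' : y i ≤ max (⨆ k, y k) 0 := le_trans hb (le_max_left _ _)
        linarith
      · exfalso; apply hn
        push_neg at hmon
        have hmono : ∀ i j : Fin m, j ≤ i → n i ≤ n j := by
          intro i j hji
          rcases lt_or_eq_of_le hji with h | h
          · exact hmon j i h
          · exact le_of_eq (by rw [h])
        set A := Finset.univ.filter (fun j : Fin m => n j = 1) with hA
        refine ⟨A.card, le_trans (Finset.card_le_card (Finset.subset_univ A))
          (le_of_eq (by simp)), ?_⟩
        funext i
        simp only [stepVec]
        rcases Nat.lt_or_ge 0 (n i) with h | h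
        · have hni : n i = 1 := le_antisymm (h1 i) h
          have hsub : Finset.Iic i ⊆ A := by
            intro j hj
            simp only [Finset.mem_Iic] at hj
            have h3 : n i ≤ n j := hmono i j hj
            have h4 := h1 j
            simp only [hA, Finset.mem_filter, Finset.mem_univ, true_and]
            omega
          have hcard : (i : ℕ) + 1 ≤ A.card := by
            have := Finset.card_le_card hsub
            rwa [Fin.card_Iic] at this
          rw [if_pos (by omega)]
          exact hni
        · have hni : n i = 0 := by omega
          have hsub : A ⊆ Finset.Iio i := by
            intro j hj
            simp only [hA, Finset.mem_filter, Finset.mem_univ, true_and] at hj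
            simp only [Finset.mem_Iio]
            by_contra hij
            push_neg at hij
            have := hmono j i hij
            omega
          have hcard : A.card ≤ (i : ℕ) := by
            have := Finset.card_le_card hsub
            rwa [Fin.card_Iio] at this
          rw [if_neg (by omega)]
          exact hni
  · unfold spike
    have hb : (⨆ i, x i) = x ⟨0, hm⟩ :=
      mySup x ⟨0, hm⟩ (fun i => hxmono ⟨0, hm⟩ i (by simp [Fin.le_def]))
    have ha : (0:ℝ) ≤ ⨅ i, x i := le_ciInf (fun i => (hx01 i).1)
    rw [hb, min_eq_right ha, max_eq_left (hx01 ⟨0, hm⟩).1]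
    have := (hx01 ⟨0, hm⟩).2
    rw [max_eq_left (by linarith)]
    ring
  · intro k hk1 hk2
    set y : Fin m → ℝ := fun i => x i - (stepVec m k i : ℝ) with hy
    have hkm1 : k - 1 < m := by omega
    set i0 : Fin m := ⟨k - 1, hkm1⟩
    set i1 : Fin m := ⟨k, hk2⟩
    have hyi0 : y i0 = x i0 - 1 := by
      simp only [hy, stepVec, i0]; rw [if_pos (by omega)]; norm_num
    have hyi1 : y i1 = x i1 := by
      simp only [hy, stepVec, i1]; rw [if_neg (by omega)]; norm_num
    have hb : (⨆ i, y i) = x i1 := by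
      rw [← hyi1]
      refine mySup y i1 (fun i => ?_)
      rw [hyi1]
      simp only [hy, stepVec]
      by_cases h : (i : ℕ) < k
      · rw [if_pos h]
        have := (hx01 i).2; have := (hx01 i1).1
        push_cast; linarith
      · rw [if_neg h]
        have : x i ≤ x i1 := hxmono i1 i (by simp [Fin.le_def, i1]; omega)
        push_cast; linarith
    have ha : (⨅ i, y i) = x i0 - 1 := by
      rw [← hyi0]
      refine myInf y i0 (fun i => ?_)
      rw [hyi0]
      simp only [hy, stepVec]
      by_cases h : (i : ℕ) < k
      · rw [if_pos h]
        have : x i0 ≤ x i := hxmono i i0 (by simp [Fin.le_def, i0]; omega)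
        push_cast; linarith
      · rw [if_neg h]
        have := (hx01 i).1; have := (hx01 i0).2
        push_cast; linarith
    unfold spike
    rw [ha, hb]
    have h01 := (hx01 i0).2
    have h10 := (hx01 i1).1
    have hmo : x i1 ≤ x i0 := hxmono i0 i1 (by apply Fin.mk_le_mk.2; omega)
    rw [min_eq_left (show x i0 - 1 ≤ 0 by linarith),
      max_eq_left (show (0:ℝ) ≤ x i1 from h10)]
    rw [max_eq_left (by linarith)]
    ring
  · set y : Fin m → ℝ := fun i => x i - (stepVec m m i : ℝ) with hy
    have hyeq : ∀ i, y i = x i - 1 := by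
      intro i; simp only [hy, stepVec]; rw [if_pos i.isLt]; norm_num
    set i0 : Fin m := ⟨m - 1, by omega⟩
    set iT : Fin m := ⟨0, hm⟩
    have ha : (⨅ i, y i) = x i0 - 1 := by
      rw [← hyeq i0]
      exact myInf y i0 (fun i => by
        rw [hyeq, hyeq]
        have : x i0 ≤ x i := hxmono i i0 (by simp [Fin.le_def, i0]; omega)
        linarith)
    have hb : (⨆ i, y i) = x iT - 1 := by
      rw [← hyeq iT]
      exact mySup y iT (fun i => by
        rw [hyeq, hyeq]
        have : x i ≤ x iT := hxmono iT i (by simp [Fin.le_def, iT])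
        linarith)
    unfold spike
    rw [ha, hb]
    have h0 := (hx01 i0).1
    have h1 := (hx01 i0).2
    have hT := (hx01 iT).2
    rw [min_eq_left (show x i0 - 1 ≤ 0 by linarith),
      max_eq_right (show x iT - 1 ≤ 0 by linarith)]
    rw [max_eq_left (by linarith)]
    ring
end

section
/- Let f: [0,1]^m → ℝ be Lipschitz (sup-norm), N ∈ ℕ, J = {0,1,...,N}, and let h: D_f → ℝ satisfy |h(y) − y| ≤ δ for all y with |y| ≤ ‖f‖_∞. Define f_N(x) = Σ_{n∈J^m} (h∘f)(n/N) φ(Nx − n), where φ is the spike function. Then ‖f − f_N‖_{L^∞([0,1]^m)} ≤ Lip(f)/N + δ. -/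
open scoped NNReal

/-- The spike-function interpolant
`f_N(x) = ∑_{n ∈ {0,...,N}^m} (h ∘ f)(n/N) φ(Nx − n)`. -/
noncomputable def interpolant (m N : ℕ) (f : (Fin m → ℝ) → ℝ) (h : ℝ → ℝ)
    (x : Fin m → ℝ) : ℝ :=
  ∑ n : Fin m → Fin (N + 1),
    h (f (fun i => (n i : ℝ) / N)) * spike m (fun i => N * x i - (n i : ℝ))

private lemma ptwise (c M P : ℝ) :
    max (M - max c P) 0 + max (min c M - P) 0 = max (M - P) 0 := by
  rcases le_or_gt M c with h1 | h1
  · rw [min_eq_right h1, max_eq_right (by have := le_max_left c P; linarith : M - max c P ≤ 0),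
      zero_add]
  · rcases le_or_gt c P with h2 | h2
    · rw [max_eq_right h2, min_eq_left h1.le,
        max_eq_right (by linarith : c - P ≤ 0), add_zero]
    · rw [max_eq_left h2.le, min_eq_left h1.le,
        max_eq_left (by linarith : (0:ℝ) ≤ M - c), max_eq_left (by linarith : (0:ℝ) ≤ c - P),
        max_eq_left (by linarith : (0:ℝ) ≤ M - P)]
      ring

open Finset in
private lemma keyA {ι : Type*} [DecidableEq ι] (u : ι → ℝ) (t : Finset ι) :
    ∀ a b : ℝ, a ≤ b →
      ∑ S ∈ t.powerset, max (S.fold min b u - (t \ S).fold max a u) 0 = b - a := by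
  induction t using Finset.induction_on with
  | empty =>
    intro a b hab
    simp [max_eq_left (by linarith : (0:ℝ) ≤ b - a)]
  | @insert i t hi ih =>
    intro a b hab
    rw [Finset.sum_powerset_insert hi, ← ih a b hab, ← Finset.sum_add_distrib]
    refine Finset.sum_congr rfl fun S hS => ?_
    rw [Finset.mem_powerset] at hS
    have hiS : i ∉ S := fun hmem => hi (hS hmem)
    have h1 : (insert i t) \ S = insert i (t \ S) := by
      ext x
      simp only [Finset.mem_sdiff, Finset.mem_insert]
      constructor
      · rintro ⟨hx1 | hx2, hns⟩
        · exact Or.inl hx1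
        · exact Or.inr ⟨hx2, hns⟩
      · rintro (hx1 | ⟨hx2, hns⟩)
        · exact ⟨Or.inl hx1, fun hmem => hiS (hx1 ▸ hmem)⟩
        · exact ⟨Or.inr hx2, hns⟩
    have h2 : (insert i t) \ (insert i S) = t \ S := by
      ext x
      simp only [Finset.mem_sdiff, Finset.mem_insert, not_or]
      constructor
      · rintro ⟨hx1 | hx2, hni, hns⟩
        · exact absurd hx1 hni
        · exact ⟨hx2, hns⟩
      · rintro ⟨hx, hns⟩
        exact ⟨Or.inr hx, fun hxi => hi (hxi ▸ hx), hns⟩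
    have hit : i ∉ t \ S := fun hmem => hi (Finset.mem_sdiff.1 hmem).1
    rw [h1, h2, Finset.fold_insert hit, Finset.fold_insert hiS]
    exact ptwise (u i) (S.fold min b u) ((t \ S).fold max a u)

open Finset in
private lemma spike_eq_fold {m : ℕ} (hm : 0 < m) (y : Fin m → ℝ) :
    spike m y = max (univ.fold min 1 (fun i => y i + 1) - univ.fold max 0 y) 0 := by
  have : Nonempty (Fin m) := ⟨⟨0, hm⟩⟩
  have hbA : BddAbove (Set.range y) := (Set.finite_range y).bddAbove
  have hbB : BddBelow (Set.range y) := (Set.finite_range y).bddBelow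
  have e1 : univ.fold min 1 (fun i => y i + 1) = 1 + min (⨅ i, y i) 0 := by
    apply le_antisymm
    · rcases min_cases (⨅ i, y i) (0:ℝ) with ⟨hmin, _⟩ | ⟨hmin, _⟩
      · obtain ⟨i0, hi0⟩ := Finite.exists_min y
        have hinf : ⨅ i, y i = y i0 := le_antisymm (ciInf_le hbB i0) (le_ciInf hi0)
        rw [hmin, hinf]
        exact (Finset.fold_min_le _).2 (Or.inr ⟨i0, mem_univ _, by linarith⟩)
      · rw [hmin]
        simpa using (Finset.fold_min_le _).2 (Or.inl le_rfl : (1:ℝ) ≤ 1 ∨ _)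
    · refine (Finset.le_fold_min _).2 ⟨?_, fun i _ => ?_⟩
      · have := min_le_right (⨅ i, y i) (0:ℝ); linarith
      · have h1 := min_le_left (⨅ i, y i) (0:ℝ)
        have h2 := ciInf_le hbB i
        linarith
  have e2 : univ.fold max 0 y = max (⨆ i, y i) 0 := by
    apply le_antisymm
    · refine (Finset.fold_max_le _).2 ⟨le_max_right _ _, fun i _ => ?_⟩
      exact le_trans (le_ciSup hbA i) (le_max_left _ _)
    · rcases max_cases (⨆ i, y i) (0:ℝ) with ⟨hmax, _⟩ | ⟨hmax, _⟩
      · obtain ⟨i0, hi0⟩ := Finite.exists_max y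
        have hsup : ⨆ i, y i = y i0 := le_antisymm (ciSup_le hi0) (le_ciSup hbA i0)
        rw [hmax, hsup]
        exact (Finset.le_fold_max _).2 (Or.inr ⟨i0, mem_univ _, le_rfl⟩)
      · rw [hmax]
        exact (Finset.le_fold_max _).2 (Or.inl le_rfl)
  rw [spike, e1, e2]

private lemma spike_eq_zero {m : ℕ} (hm : 0 < m) (y : Fin m → ℝ) (i : Fin m)
    (hy : 1 ≤ |y i|) : spike m y = 0 := by
  have : Nonempty (Fin m) := ⟨⟨0, hm⟩⟩
  have hbA : BddAbove (Set.range y) := (Set.finite_range y).bddAbove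
  have hbB : BddBelow (Set.range y) := (Set.finite_range y).bddBelow
  rw [spike]
  apply max_eq_right
  rcases le_abs.mp hy with h | h
  · have h1 : (1:ℝ) ≤ ⨆ j, y j := le_trans h (le_ciSup hbA i)
    have h2 : (1:ℝ) ≤ max (⨆ j, y j) 0 := le_trans h1 (le_max_left _ _)
    have h3 := min_le_right (⨅ j, y j) (0:ℝ)
    linarith
  · have h1 : ⨅ j, y j ≤ -1 := le_trans (ciInf_le hbB i) (by linarith)
    have h2 : min (⨅ j, y j) 0 ≤ -1 := le_trans (min_le_left _ _) h1
    have h3 := le_max_right (⨆ j, y j) (0:ℝ)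
    linarith

private lemma spike_nonneg (m : ℕ) (y : Fin m → ℝ) : 0 ≤ spike m y := le_max_right _ _

private lemma abs_le_one_of_spike_ne_zero {m : ℕ} (hm : 0 < m) (y : Fin m → ℝ)
    (hy : spike m y ≠ 0) (i : Fin m) : |y i| ≤ 1 := by
  by_contra hcon
  push_neg at hcon
  exact hy (spike_eq_zero hm y i hcon.le)

private noncomputable def kf (N : ℕ) (t : ℝ) : ℕ := min ⌊t⌋₊ (N - 1)

private lemma kf_le (N : ℕ) (t : ℝ) : kf N t ≤ N - 1 := min_le_right _ _

private lemma kf_le_self {N : ℕ} {t : ℝ} (ht : 0 ≤ t) : (kf N t : ℝ) ≤ t := by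
  calc (kf N t : ℝ) ≤ (⌊t⌋₊ : ℝ) := by exact_mod_cast min_le_left _ _
  _ ≤ t := Nat.floor_le ht

private lemma le_kf_add_one {N : ℕ} {t : ℝ} (hN : 0 < N) (htN : t ≤ N) :
    t ≤ (kf N t : ℝ) + 1 := by
  rcases le_or_gt ⌊t⌋₊ (N - 1) with hc | hc
  · have h : kf N t = ⌊t⌋₊ := min_eq_left hc
    rw [h]
    exact (Nat.lt_floor_add_one t).le
  · have h : kf N t = N - 1 := min_eq_right hc.le
    rw [h]
    have h2 : ((N - 1 : ℕ) : ℝ) = (N : ℝ) - 1 := by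
      have h3 : (1:ℕ) ≤ N := hN
      push_cast [h3]
      ring
    rw [h2]
    linarith

private noncomputable def uf (N : ℕ) (t : ℝ) : ℝ := t - kf N t

private lemma uf_nonneg {N : ℕ} {t : ℝ} (ht : 0 ≤ t) : 0 ≤ uf N t := by
  have := kf_le_self (N := N) ht
  simp only [uf]
  linarith

private lemma uf_le_one {N : ℕ} {t : ℝ} (hN : 0 < N) (htN : t ≤ N) : uf N t ≤ 1 := by
  have := le_kf_add_one (N := N) hN htN
  simp only [uf]
  linarith

open Finset in
private lemma sum_spike {m N : ℕ} (hm : 0 < m) (hN : 0 < N) (x : Fin m → ℝ)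
    (hx : x ∈ Set.Icc (0 : Fin m → ℝ) 1) :
    ∑ n : Fin m → Fin (N + 1), spike m (fun i => (N : ℝ) * x i - (n i : ℝ)) = 1 := by
  classical
  obtain ⟨hx0, hx1⟩ := hx
  have ht0 : ∀ i, 0 ≤ (N : ℝ) * x i := fun i => mul_nonneg (Nat.cast_nonneg N) (hx0 i)
  have htN : ∀ i, (N : ℝ) * x i ≤ N := fun i => by
    have h1 : x i ≤ 1 := hx1 i
    have h2 : (0:ℝ) ≤ (N:ℝ) := Nat.cast_nonneg N
    nlinarith
  have hkle : ∀ i, kf N ((N:ℝ) * x i) + 1 ≤ N := fun i => by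
    have := kf_le N ((N:ℝ) * x i)
    omega
  let e : Finset (Fin m) → (Fin m → Fin (N + 1)) := fun S i =>
    ⟨kf N ((N:ℝ) * x i) + (if i ∈ S then 1 else 0), by
      have := hkle i; split <;> omega⟩
  have heval : ∀ S i, ((e S i : ℕ) : ℝ) =
      (kf N ((N:ℝ) * x i) : ℝ) + (if i ∈ S then 1 else 0) := by
    intro S i
    simp only [e]
    push_cast
    split <;> norm_num
  have hinj : ∀ S ∈ (univ : Finset (Fin m)).powerset, ∀ T ∈ (univ : Finset (Fin m)).powerset,
      e S = e T → S = T := by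
    intro S _ T _ hST
    ext i
    have h1 : (e S i : ℕ) = (e T i : ℕ) := by rw [hST]
    simp only [e] at h1
    by_cases hiS : i ∈ S <;> by_cases hiT : i ∈ T <;>
      simp only [hiS, hiT, if_true, if_false] at h1 <;> simp [hiS, hiT] <;> omega
  have hzero : ∀ n : Fin m → Fin (N + 1), n ∈ (univ : Finset (Fin m → Fin (N+1))) →
      n ∉ univ.powerset.image e →
      spike m (fun i => (N : ℝ) * x i - (n i : ℝ)) = 0 := by
    intro n _ hn
    by_cases hall : ∀ i, (n i : ℕ) = kf N ((N:ℝ) * x i) ∨ (n i : ℕ) = kf N ((N:ℝ) * x i) + 1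
    · exfalso
      apply hn
      refine Finset.mem_image.2
        ⟨univ.filter (fun i => (n i : ℕ) = kf N ((N:ℝ) * x i) + 1),
          Finset.mem_powerset.2 (subset_univ _), ?_⟩
      funext i
      apply Fin.ext
      simp only [e, Finset.mem_filter, Finset.mem_univ, true_and]
      rcases hall i with h1 | h1
      · rw [if_neg (by omega)]
        omega
      · rw [if_pos h1]
        omega
    · push_neg at hall
      obtain ⟨i, hi1, hi2⟩ := hall
      have hcase : (n i : ℕ) + 1 ≤ kf N ((N:ℝ) * x i) ∨
          kf N ((N:ℝ) * x i) + 2 ≤ (n i : ℕ) := by omega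
      apply spike_eq_zero hm _ i
      rcases hcase with hc | hc
      · have h1 : ((n i : ℕ) : ℝ) + 1 ≤ (kf N ((N:ℝ) * x i) : ℝ) := by exact_mod_cast hc
        have h2 := kf_le_self (N := N) (ht0 i)
        exact le_abs.2 (Or.inl (by linarith))
      · have h1 : (kf N ((N:ℝ) * x i) : ℝ) + 2 ≤ ((n i : ℕ) : ℝ) := by exact_mod_cast hc
        have h2 := le_kf_add_one (N := N) hN (htN i)
        exact le_abs.2 (Or.inr (by linarith))
  rw [← Finset.sum_subset (Finset.subset_univ (univ.powerset.image e)) hzero,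
    Finset.sum_image hinj]
  have hterm : ∀ S ∈ (univ : Finset (Fin m)).powerset,
      spike m (fun i => (N : ℝ) * x i - ((e S i : ℕ) : ℝ)) =
      max (S.fold min 1 (fun i => uf N ((N:ℝ) * x i)) -
        (univ \ S).fold max 0 (fun i => uf N ((N:ℝ) * x i))) 0 := by
    intro S _
    rw [spike_eq_fold hm]
    have hA : univ.fold min 1 (fun i => (N : ℝ) * x i - ((e S i : ℕ) : ℝ) + 1) =
        S.fold min 1 (fun i => uf N ((N:ℝ) * x i)) := by
      apply le_antisymm
      · refine (Finset.le_fold_min _).2 ⟨(Finset.fold_min_le _).2 (Or.inl le_rfl), fun i hiS => ?_⟩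
        refine (Finset.fold_min_le _).2 (Or.inr ⟨i, mem_univ i, ?_⟩)
        have h1 := heval S i
        rw [if_pos hiS] at h1
        have heq : uf N ((N:ℝ) * x i) = (N:ℝ) * x i - (kf N ((N:ℝ) * x i) : ℝ) := rfl
        linarith
      · refine (Finset.le_fold_min _).2 ⟨(Finset.fold_min_le _).2 (Or.inl le_rfl), fun i _ => ?_⟩
        by_cases hiS : i ∈ S
        · have h1 : S.fold min 1 (fun i => uf N ((N:ℝ) * x i)) ≤ uf N ((N:ℝ) * x i) :=
            (Finset.fold_min_le _).2 (Or.inr ⟨i, hiS, le_rfl⟩)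
          have h2 := heval S i
          rw [if_pos hiS] at h2
          have heq : uf N ((N:ℝ) * x i) = (N:ℝ) * x i - (kf N ((N:ℝ) * x i) : ℝ) := rfl
          linarith
        · have h1 : S.fold min 1 (fun i => uf N ((N:ℝ) * x i)) ≤ 1 :=
            (Finset.fold_min_le _).2 (Or.inl le_rfl)
          have h2 : 0 ≤ uf N ((N:ℝ) * x i) := uf_nonneg (ht0 i)
          have h3 := heval S i
          rw [if_neg hiS] at h3
          have heq : uf N ((N:ℝ) * x i) = (N:ℝ) * x i - (kf N ((N:ℝ) * x i) : ℝ) := rfl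
          linarith
    have hB : univ.fold max 0 (fun i => (N : ℝ) * x i - ((e S i : ℕ) : ℝ)) =
        (univ \ S).fold max 0 (fun i => uf N ((N:ℝ) * x i)) := by
      apply le_antisymm
      · refine (Finset.fold_max_le _).2 ⟨(Finset.le_fold_max _).2 (Or.inl le_rfl), fun i _ => ?_⟩
        by_cases hiS : i ∈ S
        · have h1 : (0:ℝ) ≤ (univ \ S).fold max 0 (fun i => uf N ((N:ℝ) * x i)) :=
            (Finset.le_fold_max _).2 (Or.inl le_rfl)
          have h2 := heval S i
          rw [if_pos hiS] at h2
          have h3 : uf N ((N:ℝ) * x i) ≤ 1 := uf_le_one hN (htN i)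
          have heq : uf N ((N:ℝ) * x i) = (N:ℝ) * x i - (kf N ((N:ℝ) * x i) : ℝ) := rfl
          linarith
        · have h1 : uf N ((N:ℝ) * x i) ≤
              (univ \ S).fold max 0 (fun i => uf N ((N:ℝ) * x i)) :=
            (Finset.le_fold_max _).2 (Or.inr ⟨i, Finset.mem_sdiff.2 ⟨mem_univ i, hiS⟩, le_rfl⟩)
          have h2 := heval S i
          rw [if_neg hiS] at h2
          have heq : uf N ((N:ℝ) * x i) = (N:ℝ) * x i - (kf N ((N:ℝ) * x i) : ℝ) := rfl
          linarith
      · refine (Finset.fold_max_le _).2 ⟨(Finset.le_fold_max _).2 (Or.inl le_rfl), fun i hiU => ?_⟩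
        have hiS : i ∉ S := (Finset.mem_sdiff.1 hiU).2
        have h1 : (N : ℝ) * x i - ((e S i : ℕ) : ℝ) ≤
            univ.fold max 0 (fun i => (N : ℝ) * x i - ((e S i : ℕ) : ℝ)) :=
          (Finset.le_fold_max _).2 (Or.inr ⟨i, mem_univ i, le_rfl⟩)
        have h2 := heval S i
        rw [if_neg hiS] at h2
        have heq : uf N ((N:ℝ) * x i) = (N:ℝ) * x i - (kf N ((N:ℝ) * x i) : ℝ) := rfl
        linarith
    rw [hA, hB]
  rw [Finset.sum_congr rfl hterm, keyA (fun i => uf N ((N:ℝ) * x i)) univ 0 1 zero_le_one]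
  norm_num

/-- If `f : [0,1]^m → ℝ` is Lipschitz (sup-norm) with constant `L` and `h` satisfies
`|h(y) − y| ≤ δ` on `D_f = {y : |y| ≤ ‖f‖_∞}`, then the spike interpolant `f_N`
satisfies `‖f − f_N‖_{L^∞([0,1]^m)} ≤ L/N + δ`. -/
theorem interpolant_sup_error (m N : ℕ) (hm : 0 < m) (hN : 0 < N)
    (f : (Fin m → ℝ) → ℝ) (L : ℝ≥0)
    (hf : LipschitzOnWith L f (Set.Icc (0 : Fin m → ℝ) 1))
    (δ : ℝ) (hδ : 0 ≤ δ) (h : ℝ → ℝ)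
    (hh : ∀ y : ℝ, |y| ≤ sSup ((fun x => |f x|) '' Set.Icc (0 : Fin m → ℝ) 1) →
      |h y - y| ≤ δ) :
    ∀ x ∈ Set.Icc (0 : Fin m → ℝ) 1,
      |f x - interpolant m N f h x| ≤ (L : ℝ) / N + δ := by
  classical
  have hNpos : (0:ℝ) < N := by exact_mod_cast hN
  have hcompact : IsCompact (Set.Icc (0 : Fin m → ℝ) 1) := isCompact_Icc
  have hcont : ContinuousOn f (Set.Icc (0 : Fin m → ℝ) 1) := hf.continuousOn
  have hbdd : BddAbove ((fun x => |f x|) '' Set.Icc (0 : Fin m → ℝ) 1) :=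
    (hcompact.image_of_continuousOn hcont.abs).bddAbove
  intro x hx
  have hsum : ∑ n : Fin m → Fin (N + 1), spike m (fun i => (N : ℝ) * x i - (n i : ℝ)) = 1 :=
    sum_spike hm hN x hx
  have hpmem : ∀ n : Fin m → Fin (N + 1),
      (fun i => ((n i : ℕ) : ℝ) / N) ∈ Set.Icc (0 : Fin m → ℝ) 1 := by
    intro n
    constructor
    · intro i
      show (0:ℝ) ≤ ((n i : ℕ) : ℝ) / N
      exact div_nonneg (Nat.cast_nonneg _) hNpos.le
    · intro i
      show ((n i : ℕ) : ℝ) / N ≤ 1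
      rw [div_le_one hNpos]
      have : (n i : ℕ) ≤ N := by omega
      exact_mod_cast this
  have hkey : ∀ n : Fin m → Fin (N + 1),
      |f x - h (f (fun i => ((n i : ℕ) : ℝ) / N))| * spike m (fun i => (N : ℝ) * x i - (n i : ℝ))
      ≤ ((L : ℝ) / N + δ) * spike m (fun i => (N : ℝ) * x i - (n i : ℝ)) := by
    intro n
    rcases eq_or_ne (spike m (fun i => (N : ℝ) * x i - (n i : ℝ))) 0 with h0 | h0
    · rw [h0]; simp
    · refine mul_le_mul_of_nonneg_right ?_ (spike_nonneg _ _)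
      set p : Fin m → ℝ := fun i => ((n i : ℕ) : ℝ) / N with hp
      have hpm := hpmem n
      have hdist : dist x p ≤ 1 / N := by
        rw [dist_pi_le_iff (by positivity)]
        intro i
        have habs := abs_le_one_of_spike_ne_zero hm _ h0 i
        rw [Real.dist_eq]
        have : x i - p i = ((N : ℝ) * x i - (n i : ℝ)) / N := by
          field_simp [hp]
          simp only [hp, sub_mul, div_mul_cancel₀ _ hNpos.ne']
        rw [this, abs_div, abs_of_pos hNpos]
        gcongr
      have hfd : |f x - f p| ≤ (L : ℝ) / N := by
        have := hf.dist_le_mul x hx p hpm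
        rw [Real.dist_eq] at this
        calc |f x - f p| ≤ (L : ℝ) * dist x p := this
        _ ≤ (L : ℝ) * (1 / N) := by
            exact mul_le_mul_of_nonneg_left hdist (NNReal.coe_nonneg L)
        _ = (L : ℝ) / N := by ring
      have hfb : |f p| ≤ sSup ((fun x => |f x|) '' Set.Icc (0 : Fin m → ℝ) 1) :=
        le_csSup hbdd ⟨p, hpm, rfl⟩
      have hhd : |h (f p) - f p| ≤ δ := hh (f p) hfb
      calc |f x - h (f p)| ≤ |f x - f p| + |f p - h (f p)| := abs_sub_le _ _ _
      _ = |f x - f p| + |h (f p) - f p| := by rw [abs_sub_comm (f p)]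
      _ ≤ (L : ℝ) / N + δ := add_le_add hfd hhd
  have expand : ∑ n : Fin m → Fin (N + 1),
      (f x - h (f (fun i => ((n i : ℕ) : ℝ) / N))) *
        spike m (fun i => (N : ℝ) * x i - (n i : ℝ))
      = f x - interpolant m N f h x := by
    simp only [sub_mul]
    rw [Finset.sum_sub_distrib, ← Finset.mul_sum, hsum, mul_one, interpolant]
  rw [← expand]
  calc |∑ n : Fin m → Fin (N + 1),
      (f x - h (f (fun i => ((n i : ℕ) : ℝ) / N))) *
        spike m (fun i => (N : ℝ) * x i - (n i : ℝ))|
      ≤ ∑ n : Fin m → Fin (N + 1),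
        |(f x - h (f (fun i => ((n i : ℕ) : ℝ) / N))) *
          spike m (fun i => (N : ℝ) * x i - (n i : ℝ))| := Finset.abs_sum_le_sum_abs _ _
    _ ≤ ∑ n : Fin m → Fin (N + 1),
        ((L : ℝ) / N + δ) * spike m (fun i => (N : ℝ) * x i - (n i : ℝ)) := by
        refine Finset.sum_le_sum fun n _ => ?_
        rw [abs_mul, abs_of_nonneg (spike_nonneg _ _)]
        exact hkey n
    _ = (L : ℝ) / N + δ := by rw [← Finset.mul_sum, hsum, mul_one]
end

section
/- Under the setup of the spike-function approximation, the approximant f_N(x) = Σ_{n∈J^m} (h∘f)(n/N) φ(Nx − n) is Lipschitz with Lip^{(1)}(f_N) ≤ Lip^{(1)}(f) + 2Nδ, where Lip^{(1)} denotes the Lipschitz constant with respect to the ℓ^1 norm on the domain. -/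
open MeasureTheory intervalIntegral Set

lemma ae_of_ne (r : ℝ) {P : ℝ → Prop} (h : ∀ θ : ℝ, θ ≠ r → P θ) :
    ∀ᵐ θ : ℝ, P θ := by
  rw [MeasureTheory.ae_iff]
  refine measure_mono_null (fun θ hθ => ?_) (measure_singleton r)
  simp only [mem_setOf_eq] at hθ
  by_contra hne
  exact hθ (h θ hne)

lemma ceil_antitoneOn (a : ℝ) (s : Set ℝ) :
    AntitoneOn (fun θ : ℝ => (⌈a - θ⌉ : ℝ)) s := by
  intro u hu v hv huv
  have h : ⌈a - v⌉ ≤ ⌈a - u⌉ := Int.ceil_le_ceil (by linarith)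
  simp only []
  exact_mod_cast h

lemma ceil_intervalIntegrable (a u v : ℝ) :
    IntervalIntegrable (fun θ : ℝ => (⌈a - θ⌉ : ℝ)) volume u v :=
  (ceil_antitoneOn a _).intervalIntegrable

lemma integral_ceil (a : ℝ) : ∫ θ in (0:ℝ)..1, (⌈a - θ⌉ : ℝ) = a := by
  set r := Int.fract a with hrdef
  have hr0 : 0 ≤ r := Int.fract_nonneg a
  have hr1 : r < 1 := Int.fract_lt_one a
  have hfr : (⌊a⌋ : ℝ) + r = a := by
    rw [hrdef, Int.fract]; ring
  have hsplit := integral_add_adjacent_intervals (ceil_intervalIntegrable a 0 r)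
    (ceil_intervalIntegrable a r 1)
  have h1 : ∫ θ in (0:ℝ)..r, (⌈a - θ⌉ : ℝ) = r * ((⌊a⌋ : ℝ) + 1) := by
    rw [intervalIntegral.integral_congr_ae (g := fun _ => ((⌊a⌋ : ℝ) + 1))]
    · simp [smul_eq_mul]; ring
    · filter_upwards [ae_of_ne r (P := fun θ => θ ≠ r) (fun θ h => h)] with θ hne hθ
      rw [uIoc_of_le hr0] at hθ
      have hθr : θ < r := lt_of_le_of_ne hθ.2 hne
      have : ⌈a - θ⌉ = ⌊a⌋ + 1 := by
        rw [Int.ceil_eq_iff]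
        constructor
        · push_cast
          have : (⌊a⌋ : ℝ) = a - r := by linarith
          linarith [hθ.1]
        · push_cast
          linarith [hθ.1]
      exact_mod_cast congrArg (fun z : ℤ => (z : ℝ)) this
  have h2 : ∫ θ in r..1, (⌈a - θ⌉ : ℝ) = (1 - r) * (⌊a⌋ : ℝ) := by
    rw [intervalIntegral.integral_congr_ae (g := fun _ => ((⌊a⌋ : ℝ)))]
    · simp [smul_eq_mul]
    · filter_upwards [ae_of_ne 1 (P := fun θ => θ ≠ 1) (fun θ h => h)] with θ hne hθ
      rw [uIoc_of_le hr1.le] at hθ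
      have hθ1 : θ < 1 := lt_of_le_of_ne hθ.2 hne
      have : ⌈a - θ⌉ = ⌊a⌋ := by
        rw [Int.ceil_eq_iff]
        constructor
        · push_cast
          have : (⌊a⌋ : ℝ) = a - r := by linarith
          linarith [hθ.1]
        · push_cast
          have : (⌊a⌋ : ℝ) = a - r := by linarith
          linarith [hθ.1]
      exact_mod_cast congrArg (fun z : ℤ => (z : ℝ)) this
  rw [← hsplit, h1, h2]; linarith

lemma ceil_diff_aux (a b : ℝ) (hba : b ≤ a) :
    (fun θ : ℝ => |(⌈a - θ⌉ : ℝ) - (⌈b - θ⌉ : ℝ)|)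
      = fun θ : ℝ => (⌈a - θ⌉ : ℝ) - (⌈b - θ⌉ : ℝ) := by
  funext θ
  have h : ⌈b - θ⌉ ≤ ⌈a - θ⌉ := Int.ceil_le_ceil (by linarith)
  have h' : (⌈b - θ⌉ : ℝ) ≤ (⌈a - θ⌉ : ℝ) := by exact_mod_cast h
  exact abs_of_nonneg (by linarith)

lemma ceil_diff_comm (a b : ℝ) :
    (fun θ : ℝ => |(⌈a - θ⌉ : ℝ) - (⌈b - θ⌉ : ℝ)|)
      = fun θ : ℝ => |(⌈b - θ⌉ : ℝ) - (⌈a - θ⌉ : ℝ)| := by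
  funext θ; exact abs_sub_comm _ _

lemma ceil_diff_integrable (a b : ℝ) :
    IntervalIntegrable (fun θ : ℝ => |(⌈a - θ⌉ : ℝ) - (⌈b - θ⌉ : ℝ)|) volume 0 1 := by
  rcases le_total b a with hba | hab
  · rw [ceil_diff_aux a b hba]
    exact (ceil_intervalIntegrable a 0 1).sub (ceil_intervalIntegrable b 0 1)
  · rw [ceil_diff_comm, ceil_diff_aux b a hab]
    exact (ceil_intervalIntegrable b 0 1).sub (ceil_intervalIntegrable a 0 1)

lemma integral_ceil_diff (a b : ℝ) :
    ∫ θ in (0:ℝ)..1, |(⌈a - θ⌉ : ℝ) - (⌈b - θ⌉ : ℝ)| = |a - b| := by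
  rcases le_total b a with hba | hab
  · rw [ceil_diff_aux a b hba,
      intervalIntegral.integral_sub (ceil_intervalIntegrable a 0 1)
        (ceil_intervalIntegrable b 0 1), integral_ceil, integral_ceil,
      abs_of_nonneg (by linarith : (0:ℝ) ≤ a - b)]
  · rw [ceil_diff_comm, ceil_diff_aux b a hab,
      intervalIntegral.integral_sub (ceil_intervalIntegrable b 0 1)
        (ceil_intervalIntegrable a 0 1), integral_ceil, integral_ceil,
      abs_sub_comm, abs_of_nonneg (by linarith : (0:ℝ) ≤ b - a)]

noncomputable def gp (m N : ℕ) (x : Fin m → ℝ) (θ : ℝ) : Fin m → Fin (N + 1) :=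
  fun j => ⟨min (⌈(N : ℝ) * x j - θ⌉.toNat) N, Nat.lt_succ_of_le (min_le_right _ _)⟩

lemma gp_coe {m N : ℕ} {x : Fin m → ℝ} {θ : ℝ} (j : Fin m)
    (hx0 : 0 ≤ x j) (hx1 : x j ≤ 1) (hθ0 : 0 < θ) (hθ1 : θ < 1) :
    ((gp m N x θ j : ℕ) : ℤ) = ⌈(N : ℝ) * x j - θ⌉ := by
  have hN0 : (0:ℝ) ≤ (N:ℝ) := Nat.cast_nonneg N
  have hz1 : (-1 : ℝ) < (N : ℝ) * x j - θ := by nlinarith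
  have hzN : (N : ℝ) * x j - θ ≤ (N : ℝ) := by nlinarith
  have hc0 : 0 ≤ ⌈(N : ℝ) * x j - θ⌉ := by
    have : (-1 : ℤ) < ⌈(N : ℝ) * x j - θ⌉ := Int.lt_ceil.2 (by exact_mod_cast hz1)
    omega
  have hcN : ⌈(N : ℝ) * x j - θ⌉ ≤ (N : ℤ) := Int.ceil_le.2 (by exact_mod_cast hzN)
  have htoN : ⌈(N : ℝ) * x j - θ⌉.toNat ≤ N := by omega
  show ((min (⌈(N : ℝ) * x j - θ⌉.toNat) N : ℕ) : ℤ) = _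
  rw [min_eq_left htoN]
  exact Int.toNat_of_nonneg hc0

lemma gp_coord_iff {m N : ℕ} {x : Fin m → ℝ} {θ : ℝ} {n : Fin m → Fin (N + 1)} (j : Fin m)
    (hx0 : 0 ≤ x j) (hx1 : x j ≤ 1) (hθ0 : 0 < θ) (hθ1 : θ < 1) :
    gp m N x θ j = n j ↔
      ((N : ℝ) * x j - (n j : ℝ) ≤ θ ∧ θ < (N : ℝ) * x j - (n j : ℝ) + 1) := by
  have hcast : gp m N x θ j = n j ↔
      ((gp m N x θ j : ℕ) : ℤ) = ((n j : ℕ) : ℤ) := by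
    constructor
    · intro h; rw [h]
    · intro h; ext; exact_mod_cast h
  rw [hcast, gp_coe j hx0 hx1 hθ0 hθ1, Int.ceil_eq_iff]
  constructor
  · rintro ⟨h1, h2⟩
    constructor
    · push_cast at h2 ⊢; linarith
    · push_cast at h1 ⊢; linarith
  · rintro ⟨h1, h2⟩
    constructor
    · push_cast; linarith
    · push_cast; linarith

lemma gp_eq_iff {m N : ℕ} {x : Fin m → ℝ} {θ : ℝ} {n : Fin m → Fin (N + 1)} (hm : 0 < m)
    (hx : x ∈ Set.Icc (0 : Fin m → ℝ) 1) (hθ : θ ∈ Set.Ioo (0:ℝ) 1) :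
    gp m N x θ = n ↔
      ((⨆ j, ((N : ℝ) * x j - (n j : ℝ))) ≤ θ ∧
        θ < (⨅ j, ((N : ℝ) * x j - (n j : ℝ))) + 1) := by
  haveI : Nonempty (Fin m) := ⟨⟨0, hm⟩⟩
  set t : Fin m → ℝ := fun j => (N : ℝ) * x j - (n j : ℝ) with ht
  have hco : ∀ j, (gp m N x θ j = n j ↔ (t j ≤ θ ∧ θ < t j + 1)) := fun j =>
    gp_coord_iff j (hx.1 j) (hx.2 j) hθ.1 hθ.2
  constructor
  · intro h
    have hall : ∀ j, t j ≤ θ ∧ θ < t j + 1 := fun j => (hco j).1 (congrFun h j)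
    constructor
    · exact ciSup_le fun j => (hall j).1
    · obtain ⟨j0, hj0⟩ := Finite.exists_min t
      have : (⨅ j, t j) = t j0 :=
        le_antisymm (ciInf_le (Set.finite_range t).bddBelow j0) (le_ciInf hj0)
      rw [this]
      exact (hall j0).2
  · rintro ⟨h1, h2⟩
    funext j
    refine (hco j).2 ⟨le_trans ?_ h1, lt_of_lt_of_le h2 ?_⟩
    · exact le_ciSup (Set.finite_range t).bddAbove j
    · have := ciInf_le (Set.finite_range t).bddBelow j
      linarith

lemma indicator_Ioc_integrable (A B u v : ℝ) :
    IntervalIntegrable ((Set.Ioc A B).indicator (fun _ => (1:ℝ))) volume u v := by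
  refine Integrable.intervalIntegrable ?_
  rw [integrable_indicator_iff measurableSet_Ioc]
  exact integrableOn_const measure_Ioc_lt_top.ne

lemma integral_indicator_Ioc {A B : ℝ} (hA : 0 ≤ A) (hB : B ≤ 1) :
    ∫ θ in (0:ℝ)..1, (Set.Ioc A B).indicator (fun _ => (1:ℝ)) θ = max (B - A) 0 := by
  rcases le_total B A with hBA | hAB
  · rw [max_eq_right (by linarith)]
    rw [intervalIntegral.integral_congr (g := fun _ => (0:ℝ))]
    · simp
    · intro θ _
      simp only [Set.indicator_apply, Set.mem_Ioc]
      rw [if_neg]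
      rintro ⟨h1, h2⟩; linarith
  · rw [max_eq_left (by linarith)]
    have hsplit1 := intervalIntegral.integral_add_adjacent_intervals
      (indicator_Ioc_integrable A B 0 A) (indicator_Ioc_integrable A B A 1)
    have hsplit2 := intervalIntegral.integral_add_adjacent_intervals
      (indicator_Ioc_integrable A B A B) (indicator_Ioc_integrable A B B 1)
    have e1 : ∫ θ in (0:ℝ)..A, (Set.Ioc A B).indicator (fun _ => (1:ℝ)) θ = 0 := by
      rw [intervalIntegral.integral_congr (g := fun _ => (0:ℝ))]
      · simp
      · intro θ hθ
        rw [Set.uIcc_of_le hA] at hθ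
        simp only [Set.indicator_apply, Set.mem_Ioc]
        rw [if_neg]
        rintro ⟨h1, h2⟩; exact absurd hθ.2 (not_le.2 h1)
    have e2 : ∫ θ in A..B, (Set.Ioc A B).indicator (fun _ => (1:ℝ)) θ = B - A := by
      rw [intervalIntegral.integral_congr_ae (g := fun _ => (1:ℝ))]
      · simp
      · filter_upwards [ae_of_ne A (P := fun θ => θ ≠ A) (fun θ h => h)] with θ hne hθ
        rw [Set.uIoc_of_le hAB] at hθ
        simp only [Set.indicator_apply, Set.mem_Ioc]
        rw [if_pos ⟨lt_of_le_of_ne hθ.1.le (Ne.symm hne), hθ.2⟩]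
    have e3 : ∫ θ in B..(1:ℝ), (Set.Ioc A B).indicator (fun _ => (1:ℝ)) θ = 0 := by
      rw [intervalIntegral.integral_congr_ae (g := fun _ => (0:ℝ))]
      · simp
      · filter_upwards [ae_of_ne B (P := fun θ => θ ≠ B) (fun θ h => h)] with θ hne hθ
        rw [Set.uIoc_of_le hB] at hθ
        simp only [Set.indicator_apply, Set.mem_Ioc]
        rw [if_neg]
        rintro ⟨h1, h2⟩; exact hne (le_antisymm h2 hθ.1.le)
    rw [← hsplit1, e1, ← hsplit2, e2, e3]; ring

lemma spike_ite_aux {m N : ℕ} {x : Fin m → ℝ} (n : Fin m → Fin (N + 1)) (hm : 0 < m)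
    (hx : x ∈ Set.Icc (0 : Fin m → ℝ) 1) :
    IntervalIntegrable (fun θ => if gp m N x θ = n then (1:ℝ) else 0) volume 0 1 ∧
    ∫ θ in (0:ℝ)..1, (if gp m N x θ = n then (1:ℝ) else 0)
      = spike m (fun j => (N : ℝ) * x j - (n j : ℝ)) := by
  haveI : Nonempty (Fin m) := ⟨⟨0, hm⟩⟩
  set T : ℝ := ⨆ j, ((N : ℝ) * x j - (n j : ℝ)) with hT
  set S : ℝ := ⨅ j, ((N : ℝ) * x j - (n j : ℝ)) with hS
  set A : ℝ := max T 0 with hA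
  set B : ℝ := min (S + 1) 1 with hB
  have key : ∀ θ : ℝ, θ ∈ Set.Ioo (0:ℝ) 1 → θ ≠ A → θ ≠ B →
      (if gp m N x θ = n then (1:ℝ) else 0)
        = (Set.Ioc A B).indicator (fun _ => (1:ℝ)) θ := by
    intro θ hθ hnA hnB
    have hiff := gp_eq_iff (n := n) hm hx hθ
    simp only [Set.indicator_apply, Set.mem_Ioc]
    by_cases hc : gp m N x θ = n
    · have h := hiff.1 hc
      have h1 : A ≤ θ := max_le h.1 hθ.1.le
      have h2 : θ ≤ B := le_min (by linarith [h.2]) hθ.2.le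
      rw [if_pos hc, if_pos ⟨lt_of_le_of_ne h1 (Ne.symm hnA), h2⟩]
    · rw [if_neg hc, if_neg]
      rintro ⟨h1, h2⟩
      refine hc (hiff.2 ⟨le_trans (le_max_left _ _) h1.le, ?_⟩)
      have : θ < B := lt_of_le_of_ne h2 hnB
      exact lt_of_lt_of_le this (min_le_left _ _)
  have hae : ∀ᵐ θ ∂(volume.restrict (Set.uIoc (0:ℝ) 1)),
      (if gp m N x θ = n then (1:ℝ) else 0)
        = (Set.Ioc A B).indicator (fun _ => (1:ℝ)) θ := by
    rw [Set.uIoc_of_le (by norm_num : (0:ℝ) ≤ 1)]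
    filter_upwards [ae_restrict_mem measurableSet_Ioc,
      ae_restrict_of_ae (ae_of_ne A (P := fun θ => θ ≠ A) (fun θ h => h)),
      ae_restrict_of_ae (ae_of_ne B (P := fun θ => θ ≠ B) (fun θ h => h)),
      ae_restrict_of_ae (ae_of_ne 1 (P := fun θ => θ ≠ 1) (fun θ h => h))]
      with θ hmem hA' hB' h1'
    exact key θ ⟨hmem.1, lt_of_le_of_ne hmem.2 h1'⟩ hA' hB'
  have hBA : spike m (fun j => (N : ℝ) * x j - (n j : ℝ)) = max (B - A) 0 := by
    rw [spike, ← hT, ← hS, hA, hB]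
    rcases le_total S 0 with hS0 | hS0
    · rw [min_eq_left hS0, min_eq_left (by linarith : S + 1 ≤ 1)]
      ring_nf
    · rw [min_eq_right hS0, min_eq_right (by linarith)]
      ring_nf
  constructor
  · exact (indicator_Ioc_integrable A B 0 1).congr_ae (Filter.EventuallyEq.symm hae)
  · rw [intervalIntegral.integral_congr_ae (MeasureTheory.ae_imp_of_ae_restrict hae),
      integral_indicator_Ioc (le_max_right _ _) (min_le_right _ _), hBA]

set_option maxHeartbeats 1000000 in
lemma interpolant_int {m N : ℕ} (c : (Fin m → Fin (N + 1)) → ℝ) {x : Fin m → ℝ}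
    (hm : 0 < m) (hx : x ∈ Set.Icc (0 : Fin m → ℝ) 1) :
    IntervalIntegrable (fun θ => c (gp m N x θ)) volume 0 1 ∧
    (∑ n : Fin m → Fin (N + 1), c n * spike m (fun j => (N : ℝ) * x j - (n j : ℝ)))
      = ∫ θ in (0:ℝ)..1, c (gp m N x θ) := by
  have hpt : ∀ θ : ℝ, (∑ n : Fin m → Fin (N + 1),
      c n * (if gp m N x θ = n then (1:ℝ) else 0)) = c (gp m N x θ) := by
    intro θ
    simp only [mul_ite, mul_one, mul_zero]
    rw [Finset.sum_ite_eq]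
    simp
  have hint : ∀ n : Fin m → Fin (N + 1), IntervalIntegrable
      (fun θ => c n * (if gp m N x θ = n then (1:ℝ) else 0)) volume 0 1 :=
    fun n => ((spike_ite_aux n hm hx).1).const_mul (c n)
  have hsum : IntervalIntegrable (fun θ => ∑ n : Fin m → Fin (N + 1),
      c n * (if gp m N x θ = n then (1:ℝ) else 0)) volume 0 1 := by
    have e : (fun θ => ∑ n : Fin m → Fin (N + 1),
        c n * (if gp m N x θ = n then (1:ℝ) else 0))
        = ∑ n ∈ Finset.univ, (fun θ => c n * (if gp m N x θ = n then (1:ℝ) else 0)) := by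
      funext θ; rw [Finset.sum_apply]
    rw [e]
    exact IntervalIntegrable.sum Finset.univ (fun n _ => hint n)
  constructor
  · exact hsum.congr_ae (Filter.Eventually.of_forall (fun θ => hpt θ))
  · calc (∑ n : Fin m → Fin (N + 1), c n * spike m (fun j => (N : ℝ) * x j - (n j : ℝ)))
        = ∑ n : Fin m → Fin (N + 1),
            ∫ θ in (0:ℝ)..1, c n * (if gp m N x θ = n then (1:ℝ) else 0) := by
          refine Finset.sum_congr rfl fun n _ => ?_
          rw [intervalIntegral.integral_const_mul, (spike_ite_aux n hm hx).2]
      _ = ∫ θ in (0:ℝ)..1, ∑ n : Fin m → Fin (N + 1),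
            c n * (if gp m N x θ = n then (1:ℝ) else 0) :=
          (intervalIntegral.integral_finset_sum (fun n _ => hint n)).symm
      _ = ∫ θ in (0:ℝ)..1, c (gp m N x θ) :=
          intervalIntegral.integral_congr (fun θ _ => hpt θ)

lemma gp_dist {m N : ℕ} {x y : Fin m → ℝ} (j : Fin m)
    (hx : x ∈ Set.Icc (0 : Fin m → ℝ) 1) (hy : y ∈ Set.Icc (0 : Fin m → ℝ) 1) :
    IntervalIntegrable
      (fun θ => |((gp m N x θ j : ℕ) : ℝ) - ((gp m N y θ j : ℕ) : ℝ)|) volume 0 1 ∧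
    ∫ θ in (0:ℝ)..1, |((gp m N x θ j : ℕ) : ℝ) - ((gp m N y θ j : ℕ) : ℝ)|
      = (N : ℝ) * |x j - y j| := by
  have hae : ∀ᵐ θ ∂(volume.restrict (Set.uIoc (0:ℝ) 1)),
      |((gp m N x θ j : ℕ) : ℝ) - ((gp m N y θ j : ℕ) : ℝ)|
        = |(⌈(N : ℝ) * x j - θ⌉ : ℝ) - (⌈(N : ℝ) * y j - θ⌉ : ℝ)| := by
    rw [Set.uIoc_of_le (by norm_num : (0:ℝ) ≤ 1)]
    filter_upwards [ae_restrict_mem measurableSet_Ioc,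
      ae_restrict_of_ae (ae_of_ne 1 (P := fun θ => θ ≠ 1) (fun θ h => h))]
      with θ hmem h1'
    have hθ1 : θ < 1 := lt_of_le_of_ne hmem.2 h1'
    have ex : ((gp m N x θ j : ℕ) : ℝ) = (⌈(N : ℝ) * x j - θ⌉ : ℝ) := by
      exact_mod_cast congrArg (fun z : ℤ => (z : ℝ))
        (gp_coe j (hx.1 j) (hx.2 j) hmem.1 hθ1)
    have ey : ((gp m N y θ j : ℕ) : ℝ) = (⌈(N : ℝ) * y j - θ⌉ : ℝ) := by
      exact_mod_cast congrArg (fun z : ℤ => (z : ℝ))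
        (gp_coe j (hy.1 j) (hy.2 j) hmem.1 hθ1)
    rw [ex, ey]
  constructor
  · exact (ceil_diff_integrable ((N : ℝ) * x j) ((N : ℝ) * y j)).congr_ae
      (Filter.EventuallyEq.symm hae)
  · rw [intervalIntegral.integral_congr_ae (MeasureTheory.ae_imp_of_ae_restrict hae),
      integral_ceil_diff]
    rw [show (N : ℝ) * x j - (N : ℝ) * y j = (N : ℝ) * (x j - y j) by ring,
      abs_mul, abs_of_nonneg (Nat.cast_nonneg N : (0:ℝ) ≤ (N:ℝ))]

/-- If `f : [0,1]^m → ℝ` is `ℓ¹`-Lipschitz with constant `L₁` and `h` satisfies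
`|h(y) − y| ≤ δ` on `D_f = {y : |y| ≤ ‖f‖_∞}`, then the spike interpolant `f_N`
is `ℓ¹`-Lipschitz on `[0,1]^m` with constant at most `L₁ + 2Nδ`. -/
theorem interpolant_lipschitz (m N : ℕ) (hm : 0 < m) (hN : 0 < N)
    (f : (Fin m → ℝ) → ℝ) (L₁ : ℝ)
    (hf : ∀ x ∈ Set.Icc (0 : Fin m → ℝ) 1, ∀ y ∈ Set.Icc (0 : Fin m → ℝ) 1,
      |f x - f y| ≤ L₁ * ∑ i, |x i - y i|)
    (δ : ℝ) (hδ : 0 ≤ δ) (h : ℝ → ℝ)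
    (hh : ∀ y : ℝ, |y| ≤ sSup ((fun x => |f x|) '' Set.Icc (0 : Fin m → ℝ) 1) →
      |h y - y| ≤ δ) :
    ∀ x ∈ Set.Icc (0 : Fin m → ℝ) 1, ∀ y ∈ Set.Icc (0 : Fin m → ℝ) 1,
      |interpolant m N f h x - interpolant m N f h y| ≤
        (L₁ + 2 * N * δ) * ∑ i, |x i - y i| := by
  intro x hx y hy
  have hN0 : (0:ℝ) < (N:ℝ) := by exact_mod_cast hN
  have hm0 : (0:ℝ) < (m:ℝ) := by exact_mod_cast hm
  set c : (Fin m → Fin (N + 1)) → ℝ := fun n => h (f (fun i => (n i : ℝ) / N)) with hc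
  have h0m : (0 : Fin m → ℝ) ∈ Set.Icc (0 : Fin m → ℝ) 1 :=
    ⟨le_refl _, fun i => by norm_num⟩
  have h1m : (1 : Fin m → ℝ) ∈ Set.Icc (0 : Fin m → ℝ) 1 :=
    ⟨fun i => by norm_num, le_refl _⟩
  have hL₁ : 0 ≤ L₁ := by
    have h01 := hf 0 h0m 1 h1m
    have hsum : (∑ i : Fin m, |(0 : Fin m → ℝ) i - (1 : Fin m → ℝ) i|) = (m:ℝ) := by
      simp
    rw [hsum] at h01
    nlinarith [abs_nonneg (f 0 - f 1)]
  have hbdd : BddAbove ((fun x => |f x|) '' Set.Icc (0 : Fin m → ℝ) 1) := by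
    refine ⟨|f 0| + L₁ * m, ?_⟩
    rintro v ⟨z, hz, rfl⟩
    have hz0 := hf z hz 0 h0m
    have hle : (∑ i : Fin m, |z i - (0 : Fin m → ℝ) i|) ≤ (m:ℝ) := by
      have : ∀ i : Fin m, |z i - (0 : Fin m → ℝ) i| ≤ 1 := by
        intro i
        have h1 := hz.1 i
        have h2 := hz.2 i
        simp only [Pi.zero_apply, sub_zero] at *
        rw [abs_of_nonneg h1]
        exact h2
      calc (∑ i : Fin m, |z i - (0 : Fin m → ℝ) i|) ≤ ∑ _i : Fin m, (1:ℝ) :=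
            Finset.sum_le_sum fun i _ => this i
        _ = (m:ℝ) := by simp
    have : |f z - f 0| ≤ L₁ * m := le_trans hz0 (mul_le_mul_of_nonneg_left hle hL₁)
    calc |f z| = |(f z - f 0) + f 0| := by ring_nf
      _ ≤ |f z - f 0| + |f 0| := abs_add_le _ _
      _ ≤ L₁ * m + |f 0| := add_le_add_left this _
      _ = |f 0| + L₁ * m := by ring
  have hfb : ∀ z ∈ Set.Icc (0 : Fin m → ℝ) 1, |h (f z) - f z| ≤ δ := fun z hz =>
    hh _ (le_csSup hbdd ⟨z, hz, rfl⟩)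
  -- grid Lipschitz bound
  have hcb : ∀ n n' : Fin m → Fin (N + 1), |c n - c n'| ≤
      (L₁ / N + 2 * δ) * ∑ j, |((n j : ℕ) : ℝ) - ((n' j : ℕ) : ℝ)| := by
    intro n n'
    set D : ℝ := ∑ j, |((n j : ℕ) : ℝ) - ((n' j : ℕ) : ℝ)| with hD
    set p : Fin m → ℝ := fun i => (n i : ℝ) / N with hp
    set q : Fin m → ℝ := fun i => (n' i : ℝ) / N with hq
    have hmem : ∀ (k : Fin m → Fin (N + 1)),
        (fun i => ((k i : ℕ) : ℝ) / N) ∈ Set.Icc (0 : Fin m → ℝ) 1 := by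
      intro k
      constructor
      · intro i; exact div_nonneg (Nat.cast_nonneg _) hN0.le
      · intro i
        have : ((k i : ℕ) : ℝ) ≤ N := by exact_mod_cast Fin.is_le (k i)
        exact div_le_one_of_le₀ this hN0.le
    have hpm : p ∈ Set.Icc (0 : Fin m → ℝ) 1 := hmem n
    have hqm : q ∈ Set.Icc (0 : Fin m → ℝ) 1 := hmem n'
    have hpq : |f p - f q| ≤ L₁ / N * D := by
      have := hf p hpm q hqm
      have hsum : (∑ i : Fin m, |p i - q i|) = D / N := by
        rw [hD, Finset.sum_div]
        refine Finset.sum_congr rfl fun i _ => ?_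
        rw [hp, hq]
        rw [div_sub_div_same, abs_div, abs_of_pos hN0]
      rw [hsum] at this
      calc |f p - f q| ≤ L₁ * (D / N) := this
        _ = L₁ / N * D := by ring
    have key : |c n - c n'| ≤ 2 * δ + L₁ / N * D := by
      have e : c n - c n' = (h (f p) - f p) + ((f p - f q) + (f q - h (f q))) := by
        rw [show c n = h (f p) from rfl, show c n' = h (f q) from rfl]; ring
      calc |c n - c n'| ≤ |h (f p) - f p| + |(f p - f q) + (f q - h (f q))| := by
            rw [e]; exact abs_add_le _ _
        _ ≤ |h (f p) - f p| + (|f p - f q| + |f q - h (f q)|) :=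
            add_le_add_right (abs_add_le _ _) _
        _ ≤ δ + (L₁ / N * D + δ) := by
            have h1 := hfb p hpm
            have h2 := hfb q hqm
            rw [abs_sub_comm] at h2
            exact add_le_add h1 (add_le_add hpq h2)
        _ = 2 * δ + L₁ / N * D := by ring
    rcases eq_or_ne n n' with rfl | hne
    · have hD0 : D = 0 := by
        rw [hD]; exact Finset.sum_eq_zero fun j _ => by simp
      rw [hD0, sub_self, abs_zero, mul_zero]
    · have hD1 : (1:ℝ) ≤ D := by
        obtain ⟨j, hj⟩ := Function.ne_iff.1 hne
        have hnej : (n j : ℕ) ≠ (n' j : ℕ) := fun hcc => hj (Fin.ext hcc)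
        have hz : ((n j : ℕ) : ℤ) - ((n' j : ℕ) : ℤ) ≠ 0 :=
          sub_ne_zero.2 (by exact_mod_cast hnej)
        have h1 : (1:ℤ) ≤ |((n j : ℕ) : ℤ) - ((n' j : ℕ) : ℤ)| := Int.one_le_abs hz
        have h1' : (1:ℝ) ≤ |((n j : ℕ) : ℝ) - ((n' j : ℕ) : ℝ)| := by
          exact_mod_cast h1
        have hge : |((n j : ℕ) : ℝ) - ((n' j : ℕ) : ℝ)| ≤ D := by
          rw [hD]
          exact Finset.single_le_sum
            (f := fun j => |((n j : ℕ) : ℝ) - ((n' j : ℕ) : ℝ)|)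
            (fun j _ => abs_nonneg _) (Finset.mem_univ j)
        exact le_trans h1' hge
      have h2 : 2 * δ ≤ 2 * δ * D := by nlinarith
      have hLN : 0 ≤ L₁ / N := div_nonneg hL₁ hN0.le
      calc |c n - c n'| ≤ 2 * δ + L₁ / N * D := key
        _ ≤ 2 * δ * D + L₁ / N * D := by linarith
        _ = (L₁ / N + 2 * δ) * D := by ring
  -- assembly
  have hix := interpolant_int c hm hx
  have hiy := interpolant_int c hm hy
  have hFx : interpolant m N f h x = ∫ θ in (0:ℝ)..1, c (gp m N x θ) := hix.2
  have hFy : interpolant m N f h y = ∫ θ in (0:ℝ)..1, c (gp m N y θ) := hiy.2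
  have hsub : interpolant m N f h x - interpolant m N f h y
      = ∫ θ in (0:ℝ)..1, (c (gp m N x θ) - c (gp m N y θ)) := by
    rw [hFx, hFy, ← intervalIntegral.integral_sub hix.1 hiy.1]
  have hint2 : IntervalIntegrable (fun θ => (L₁ / N + 2 * δ) *
      ∑ j, |((gp m N x θ j : ℕ) : ℝ) - ((gp m N y θ j : ℕ) : ℝ)|) volume 0 1 := by
    apply IntervalIntegrable.const_mul
    have e : (fun θ => ∑ j, |((gp m N x θ j : ℕ) : ℝ) - ((gp m N y θ j : ℕ) : ℝ)|)
        = ∑ j ∈ Finset.univ,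
          (fun θ => |((gp m N x θ j : ℕ) : ℝ) - ((gp m N y θ j : ℕ) : ℝ)|) := by
      funext θ; rw [Finset.sum_apply]
    rw [e]
    exact IntervalIntegrable.sum Finset.univ (fun j _ => (gp_dist j hx hy).1)
  calc |interpolant m N f h x - interpolant m N f h y|
      = |∫ θ in (0:ℝ)..1, (c (gp m N x θ) - c (gp m N y θ))| := by rw [hsub]
    _ ≤ ∫ θ in (0:ℝ)..1, |c (gp m N x θ) - c (gp m N y θ)| :=
        intervalIntegral.abs_integral_le_integral_abs (by norm_num)
    _ ≤ ∫ θ in (0:ℝ)..1, (L₁ / N + 2 * δ) *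
          ∑ j, |((gp m N x θ j : ℕ) : ℝ) - ((gp m N y θ j : ℕ) : ℝ)| :=
        intervalIntegral.integral_mono_on (by norm_num)
          ((hix.1.sub hiy.1).abs) hint2 (fun θ _ => hcb _ _)
    _ = (L₁ / N + 2 * δ) * ∑ j, ∫ θ in (0:ℝ)..1,
          |((gp m N x θ j : ℕ) : ℝ) - ((gp m N y θ j : ℕ) : ℝ)| := by
        rw [intervalIntegral.integral_const_mul,
          intervalIntegral.integral_finset_sum (fun j _ => (gp_dist j hx hy).1)]
    _ = (L₁ / N + 2 * δ) * ∑ j, (N : ℝ) * |x j - y j| := by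
        rw [Finset.sum_congr rfl fun j _ => (gp_dist j hx hy).2]
    _ = (L₁ + 2 * N * δ) * ∑ i, |x i - y i| := by
        rw [← Finset.mul_sum]
        field_simp
end

section
/- Let n, N ∈ ℕ with N ≥ n, δ = 1/N, and let w₁,...,w_n ∈ [0,1] with Σ w_k = 1. Then there exist ŵ₁,...,ŵ_n ∈ δℕ (strictly positive integer multiples of δ) with Σ ŵ_k = 1 and Σ_{k=1}^n |ŵ_k − w_k| ≤ 4δ(n−1). -/
/-- Quantization of probability vectors: if `N ≥ n`, `δ = 1/N`, and `w₁,...,w_n ∈ [0,1]`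
sum to `1`, then there exist `ŵ₁,...,ŵ_n`, each a strictly positive integer multiple of
`δ`, summing to `1`, with `∑ |ŵ_k − w_k| ≤ 4δ(n−1)`. -/
theorem quantize_probability_vector (n N : ℕ) (hN : 0 < N) (hnN : n ≤ N)
    (w : Fin n → ℝ) (hw : ∀ k, w k ∈ Set.Icc (0 : ℝ) 1)
    (hsum : ∑ k, w k = 1) :
    ∃ what : Fin n → ℝ,
      (∀ k, ∃ j : ℕ, 0 < j ∧ what k = (j : ℝ) * (1 / N)) ∧
      (∑ k, what k = 1) ∧
      (∑ k, |what k - w k| ≤ 4 * (1 / N) * ((n : ℝ) - 1)) := by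
  have hn : 0 < n := by
    rcases Nat.eq_zero_or_pos n with h | h
    · subst h; simp at hsum
    · exact h
  have hNpos : (0 : ℝ) < N := by exact_mod_cast hN
  set δ : ℝ := 1 / N with hδ
  have hδpos : 0 < δ := by positivity
  have hδN : δ * N = 1 := by rw [hδ, one_div, inv_mul_cancel₀ hNpos.ne']
  have hw0 : ∀ k, 0 ≤ w k := fun k => (hw k).1
  obtain ⟨k₀, -, hk₀⟩ :=
    Finset.exists_max_image (Finset.univ : Finset (Fin n)) w ⟨⟨0, hn⟩, Finset.mem_univ _⟩
  have hk₀' : ∀ k, w k ≤ w k₀ := fun k => hk₀ k (Finset.mem_univ k)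
  set c : ℝ := ((N - n : ℕ) : ℝ) with hc
  have hcval : c = (N : ℝ) - n := by simp [hc, Nat.cast_sub hnN]
  have hc0 : 0 ≤ c := by positivity
  set f : Fin n → ℕ := fun k => ⌊c * w k⌋₊ + 1 with hf
  set S : ℕ := ∑ k ∈ Finset.univ.erase k₀, f k with hS
  have hcw : ∀ k, 0 ≤ c * w k := fun k => mul_nonneg hc0 (hw0 k)
  have hfle : ∀ k, (f k : ℝ) ≤ c * w k + 1 := by
    intro k
    have := Nat.floor_le (hcw k)
    simp only [hf]
    push_cast
    linarith
  have hfge : ∀ k, c * w k ≤ (f k : ℝ) := by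
    intro k
    have := Nat.lt_floor_add_one (c * w k)
    simp only [hf]
    push_cast
    linarith
  have hsum_erase : ∑ k ∈ Finset.univ.erase k₀, w k = 1 - w k₀ := by
    have h := Finset.add_sum_erase Finset.univ w (Finset.mem_univ k₀)
    linarith [hsum, h]
  have hn1 : (1 : ℝ) ≤ n := by exact_mod_cast hn
  have hcardR : ((Finset.univ.erase k₀).card : ℝ) = (n : ℝ) - 1 := by
    rw [Finset.card_erase_of_mem (Finset.mem_univ k₀)]
    simp [Nat.cast_sub hn]
  -- the total number of quanta used by the non-maximal coordinates is < N
  have hSle : (S : ℝ) ≤ c * (1 - w k₀) + ((n : ℝ) - 1) := by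
    have h1 : (S : ℝ) = ∑ k ∈ Finset.univ.erase k₀, (f k : ℝ) := by
      simp [hS]
    have h2 : ∑ k ∈ Finset.univ.erase k₀, (f k : ℝ) ≤
        ∑ k ∈ Finset.univ.erase k₀, (c * w k + 1) :=
      Finset.sum_le_sum fun k _ => hfle k
    have h3 : ∑ k ∈ Finset.univ.erase k₀, (c * w k + 1) =
        c * (1 - w k₀) + ((n : ℝ) - 1) := by
      rw [Finset.sum_add_distrib, ← Finset.mul_sum, hsum_erase, Finset.sum_const,
        nsmul_eq_mul, mul_one, hcardR]
    linarith
  have hSltN : S < N := by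
    have hr : (S : ℝ) < N := by
      have hwk0 : 0 ≤ w k₀ := hw0 k₀
      have h4 : c * (1 - w k₀) ≤ c := by nlinarith
      calc (S : ℝ) ≤ c * (1 - w k₀) + ((n : ℝ) - 1) := hSle
        _ ≤ c + ((n : ℝ) - 1) := by linarith
        _ = (N : ℝ) - 1 := by rw [hcval]; ring
        _ < N := by linarith
    exact_mod_cast hr
  set g : Fin n → ℕ := fun k => if k = k₀ then N - S else f k with hg
  set what : Fin n → ℝ := fun k => (g k : ℝ) * δ with hwhat
  have hgerase : ∀ k ∈ Finset.univ.erase k₀, what k = (f k : ℝ) * δ := by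
    intro k hk
    simp [hwhat, hg, Finset.ne_of_mem_erase hk]
  -- sum is 1
  have hgsum : ∑ k, g k = N := by
    rw [← Finset.add_sum_erase Finset.univ g (Finset.mem_univ k₀)]
    have h1 : g k₀ = N - S := by simp [hg]
    have h2 : ∑ k ∈ Finset.univ.erase k₀, g k = S := by
      rw [hS]
      exact Finset.sum_congr rfl fun k hk => by simp [hg, Finset.ne_of_mem_erase hk]
    rw [h1, h2]
    omega
  have hwhatsum : ∑ k, what k = 1 := by
    have : ∑ k, what k = ((∑ k, g k : ℕ) : ℝ) * δ := by
      rw [hwhat]; push_cast; rw [Finset.sum_mul]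
    rw [this, hgsum, mul_comm]
    exact hδN
  -- per-coordinate error bound on non-maximal coordinates
  have herr : ∀ k ∈ Finset.univ.erase k₀, |what k - w k| ≤ δ + (n : ℝ) * w k * δ := by
    intro k hk
    have h1 := hfle k
    have h2 := hfge k
    have hwk := hw0 k
    rw [hgerase k hk, abs_le, hcval] at *
    constructor
    · -- lower bound: -(δ + n w k δ) ≤ f k δ - w k
      nlinarith [mul_le_mul_of_nonneg_right h2 hδpos.le, mul_nonneg hwk hδpos.le]
    · nlinarith [mul_le_mul_of_nonneg_right h1 hδpos.le, mul_nonneg hwk hδpos.le,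
        mul_nonneg (mul_nonneg (by positivity : (0:ℝ) ≤ (n:ℝ)) hwk) hδpos.le]
  -- the maximal weight is at least 1/n
  have h1n : 1 ≤ (n : ℝ) * w k₀ := by
    have hle : ∑ k, w k ≤ ∑ _k : Fin n, w k₀ := Finset.sum_le_sum fun k _ => hk₀' k
    rw [hsum, Finset.sum_const, Finset.card_univ, Fintype.card_fin, nsmul_eq_mul] at hle
    exact hle
  have herase_bound : ∑ k ∈ Finset.univ.erase k₀, |what k - w k| ≤ 2 * ((n : ℝ) - 1) * δ := by
    have h1 : ∑ k ∈ Finset.univ.erase k₀, |what k - w k| ≤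
        ∑ k ∈ Finset.univ.erase k₀, (δ + (n : ℝ) * w k * δ) :=
      Finset.sum_le_sum herr
    have h2 : ∑ k ∈ Finset.univ.erase k₀, (δ + (n : ℝ) * w k * δ) =
        ((n : ℝ) - 1) * δ + (n : ℝ) * (1 - w k₀) * δ := by
      rw [Finset.sum_add_distrib, Finset.sum_const, nsmul_eq_mul, hcardR]
      have h : ∑ k ∈ Finset.univ.erase k₀, (n : ℝ) * w k * δ =
          (n : ℝ) * (∑ k ∈ Finset.univ.erase k₀, w k) * δ := by
        rw [Finset.mul_sum, Finset.sum_mul]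
      rw [h, hsum_erase]
    have h3 : (n : ℝ) * (1 - w k₀) * δ ≤ ((n : ℝ) - 1) * δ := by
      nlinarith
    linarith
  -- the error at k₀ is controlled by the others since both sums are 1
  have hek₀ : what k₀ - w k₀ = -∑ k ∈ Finset.univ.erase k₀, (what k - w k) := by
    have h1 := Finset.add_sum_erase Finset.univ (fun k => what k - w k) (Finset.mem_univ k₀)
    have h2 : ∑ k, (what k - w k) = 0 := by
      rw [Finset.sum_sub_distrib, hwhatsum, hsum]; ring
    linarith [h1, h2]
  have hk₀bound : |what k₀ - w k₀| ≤ 2 * ((n : ℝ) - 1) * δ := by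
    rw [hek₀, abs_neg]
    calc |∑ k ∈ Finset.univ.erase k₀, (what k - w k)| ≤
        ∑ k ∈ Finset.univ.erase k₀, |what k - w k| := Finset.abs_sum_le_sum_abs _ _
      _ ≤ 2 * ((n : ℝ) - 1) * δ := herase_bound
  refine ⟨what, ?_, hwhatsum, ?_⟩
  · intro k
    refine ⟨g k, ?_, rfl⟩
    by_cases h : k = k₀
    · simp [hg, h, Nat.sub_pos_of_lt hSltN]
    · simp [hg, h, hf]
  · rw [← Finset.add_sum_erase Finset.univ (fun k => |what k - w k|) (Finset.mem_univ k₀)]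
    have : 4 * (1 / (N : ℝ)) * ((n : ℝ) - 1) = 4 * ((n : ℝ) - 1) * δ := by rw [hδ]; ring
    rw [this]
    linarith [hk₀bound, herase_bound]
end

section
/- Let g: ℝ → [0,1] be the sawtooth function (g(x) = 2x on [0,1/2), 2(1−x) on [1/2,1], 0 elsewhere) and g_s its s-fold composition. Then g_s(x) = 0 for x ∉ (0,1), and for x ∈ [0,1]: g_s(x) = 2^s x − ⌊2^s x⌋ if ⌊2^s x⌋ is even, and g_s(x) = 1 − 2^s x + ⌊2^s x⌋ if ⌊2^s x⌋ is odd. Moreover, g_s = Σ_{k=1}^{2^{s−1}} h_k where h_k(x) = g(2^{s−1}x − k + 1), and each h_k vanishes outside ((k−1)/2^{s−1}, k/2^{s−1}). -/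
/-- The sawtooth function: `g(x) = 2x` on `[0,1/2)`, `g(x) = 2(1−x)` on `[1/2,1]`,
and `g(x) = 0` elsewhere. -/
noncomputable def sawtooth (x : ℝ) : ℝ :=
  if 0 ≤ x ∧ x < 1 / 2 then 2 * x
  else if 1 / 2 ≤ x ∧ x ≤ 1 then 2 * (1 - x)
  else 0

lemma sawtooth_zero_of_notIoo {y : ℝ} (h : y ∉ Set.Ioo (0 : ℝ) 1) : sawtooth y = 0 := by
  simp only [Set.mem_Ioo, not_and_or, not_lt] at h
  unfold sawtooth
  split_ifs with h1 h2
  · rcases h with h | h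
    · linarith [h1.1]
    · linarith [h1.2]
  · rcases h with h | h
    · linarith [h2.1]
    · linarith [h2.2]
  · rfl

lemma sawtooth_zero : sawtooth 0 = 0 := by norm_num [sawtooth]

lemma sawtooth_symm {t : ℝ} (h0 : 0 ≤ t) (h1 : t ≤ 1) : sawtooth (1 - t) = sawtooth t := by
  unfold sawtooth
  rcases lt_trichotomy t (1 / 2) with h | h | h
  · rw [if_neg (by push_neg; intro _; linarith), if_pos ⟨by linarith, by linarith⟩,
      if_pos ⟨h0, h⟩]
    ring
  · rw [h]; norm_num
  · rw [if_pos ⟨by linarith, by linarith⟩, if_neg (by push_neg; intro _; linarith),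
      if_pos ⟨by linarith, h1⟩]

/-- The main formula for iterates of the sawtooth on `[0,1]`. -/
lemma sawtooth_iter_formula : ∀ s : ℕ, ∀ x : ℝ, 0 ≤ x → x ≤ 1 →
    sawtooth^[s] x =
      if Even ⌊(2 : ℝ) ^ s * x⌋ then 2 ^ s * x - (⌊(2 : ℝ) ^ s * x⌋ : ℝ)
      else 1 - 2 ^ s * x + (⌊(2 : ℝ) ^ s * x⌋ : ℝ) := by
  intro s
  induction s with
  | zero =>
    intro x hx0 hx1
    simp only [Function.iterate_zero, id_eq, pow_zero, one_mul]
    rcases lt_or_eq_of_le hx1 with h | h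
    · have hf : ⌊x⌋ = 0 := Int.floor_eq_zero_iff.mpr ⟨hx0, h⟩
      simp [hf]
    · subst h
      norm_num
  | succ s ih =>
    intro x hx0 hx1
    rw [Function.iterate_succ_apply', ih x hx0 hx1]
    set n := ⌊(2 : ℝ) ^ s * x⌋ with hn
    set t : ℝ := 2 ^ s * x - n with htdef
    have ht0 : 0 ≤ t := by
      have := Int.floor_le ((2 : ℝ) ^ s * x); simp only [htdef]; linarith
    have ht1 : t < 1 := by
      have := Int.lt_floor_add_one ((2 : ℝ) ^ s * x); simp only [htdef]; linarith
    have h2x : (2 : ℝ) ^ (s + 1) * x = ((2 * n : ℤ) : ℝ) + 2 * t := by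
      push_cast; simp only [htdef]; ring
    have hfloor : ⌊(2 : ℝ) ^ (s + 1) * x⌋ = 2 * n + ⌊2 * t⌋ := by
      rw [h2x, Int.floor_intCast_add]
    rcases lt_or_ge t (1 / 2) with hlt | hge
    · -- ⌊2t⌋ = 0
      have h2t : ⌊(2 : ℝ) * t⌋ = 0 := Int.floor_eq_zero_iff.mpr ⟨by linarith, by linarith⟩
      have hEv : Even ⌊(2 : ℝ) ^ (s + 1) * x⌋ := by
        rw [hfloor, h2t, add_zero]; exact even_two_mul n
      rw [if_pos hEv, hfloor, h2t]
      by_cases hne : Even n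
      · rw [if_pos hne]
        have : sawtooth t = 2 * t := by
          unfold sawtooth; rw [if_pos ⟨ht0, hlt⟩]
        rw [this]; push_cast; simp only [htdef]; ring
      · rw [if_neg hne]
        have h1t : sawtooth (1 - t) = 2 * t := by
          unfold sawtooth
          rw [if_neg (by push_neg; intro _; linarith), if_pos ⟨by linarith, by linarith⟩]
          ring
        have : (1 : ℝ) - (2 ^ s * x - n) + n = 1 - t + 2 * n - n := by
          simp only [htdef]; push_cast; ring
        rw [show (1 : ℝ) - 2 ^ s * x + n = 1 - t by simp only [htdef]; ring, h1t]
        push_cast; simp only [htdef]; ring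
    · -- ⌊2t⌋ = 1
      have h2t : ⌊(2 : ℝ) * t⌋ = 1 := by
        rw [Int.floor_eq_iff]
        constructor <;> push_cast <;> linarith
      have hOdd : ¬ Even ⌊(2 : ℝ) ^ (s + 1) * x⌋ := by
        rw [hfloor, h2t]; simp [Int.even_add_one, parity_simps]
      rw [if_neg hOdd, hfloor, h2t]
      by_cases hne : Even n
      · rw [if_pos hne]
        have : sawtooth t = 2 * (1 - t) := by
          unfold sawtooth
          rw [if_neg (by push_neg; intro _; linarith), if_pos ⟨hge, by linarith⟩]
        rw [this]
        push_cast; simp only [htdef]; ring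
      · rw [if_neg hne]
        have h1t : sawtooth (1 - t) = 2 * (1 - t) := by
          unfold sawtooth
          rcases lt_or_ge (1 - t) (1 / 2) with h | h
          · rw [if_pos ⟨by linarith, h⟩]
          · rw [if_neg (by push_neg; intro _; linarith), if_pos ⟨h, by linarith⟩]
            linarith
        rw [show (1 : ℝ) - 2 ^ s * x + n = 1 - t by simp only [htdef]; ring, h1t]
        push_cast; simp only [htdef]; ring

lemma sawtooth_iter_zero (s : ℕ) (hs : 1 ≤ s) {x : ℝ} (h : x ∉ Set.Ioo (0 : ℝ) 1) :
    sawtooth^[s] x = 0 := by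
  obtain ⟨p, rfl⟩ := Nat.exists_eq_add_of_le hs
  rw [add_comm, Function.iterate_succ_apply, sawtooth_zero_of_notIoo h,
    Function.iterate_fixed sawtooth_zero]

/-- Properties of the `s`-fold composition `g_s` of the sawtooth function:
it vanishes outside `(0,1)`; on `[0,1]` it equals `2^s x − ⌊2^s x⌋` or
`1 − 2^s x + ⌊2^s x⌋` according to the parity of `⌊2^s x⌋`; and it decomposes as
`g_s = ∑_{k=1}^{2^{s−1}} h_k` with `h_k(x) = g(2^{s−1} x − k + 1)`, each `h_k`
vanishing outside `((k−1)/2^{s−1}, k/2^{s−1})`. -/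
theorem sawtooth_iterate_properties (s : ℕ) (hs : 1 ≤ s) :
    (∀ x : ℝ, x ∉ Set.Ioo (0 : ℝ) 1 → sawtooth^[s] x = 0) ∧
    (∀ x ∈ Set.Icc (0 : ℝ) 1,
      (Even ⌊(2 : ℝ) ^ s * x⌋ → sawtooth^[s] x = 2 ^ s * x - (⌊(2 : ℝ) ^ s * x⌋ : ℝ)) ∧
      (Odd ⌊(2 : ℝ) ^ s * x⌋ → sawtooth^[s] x = 1 - 2 ^ s * x + (⌊(2 : ℝ) ^ s * x⌋ : ℝ))) ∧
    (∀ x : ℝ, sawtooth^[s] x =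
      ∑ k ∈ Finset.range (2 ^ (s - 1)), sawtooth (2 ^ (s - 1) * x - (k : ℝ))) ∧
    (∀ k ∈ Finset.range (2 ^ (s - 1)), ∀ x : ℝ,
      x ∉ Set.Ioo ((k : ℝ) / 2 ^ (s - 1)) (((k : ℝ) + 1) / 2 ^ (s - 1)) →
        sawtooth (2 ^ (s - 1) * x - (k : ℝ)) = 0) := by
  obtain ⟨p, rfl⟩ : ∃ p, s = p + 1 := ⟨s - 1, (Nat.succ_pred_eq_of_pos hs).symm⟩
  have hpow : (0 : ℝ) < 2 ^ p := by positivity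
  refine ⟨fun x hx => sawtooth_iter_zero _ hs hx, ?_, ?_, ?_⟩
  · intro x hx
    have h := sawtooth_iter_formula (p + 1) x hx.1 hx.2
    constructor
    · intro hEv; rw [h, if_pos hEv]
    · intro hOd; rw [h, if_neg (Int.not_even_iff_odd.mpr hOd)]
  · intro x
    simp only [Nat.add_sub_cancel]
    by_cases hx : x ∈ Set.Ioo (0 : ℝ) 1
    · obtain ⟨hx0, hx1⟩ := hx
      set m := ⌊(2 : ℝ) ^ p * x⌋ with hm
      have hm0 : 0 ≤ m := Int.floor_nonneg.mpr (by positivity)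
      have hmlt : m < 2 ^ p := by
        rw [hm, Int.floor_lt]
        push_cast
        nlinarith
      have hmem : m.toNat ∈ Finset.range (2 ^ p) := by
        rw [Finset.mem_range]
        have h1 : (m.toNat : ℤ) < 2 ^ p := by rw [Int.toNat_of_nonneg hm0]; exact hmlt
        exact_mod_cast h1
      rw [Finset.sum_eq_single_of_mem m.toNat hmem ?side]
      · -- main term
        have hcast : ((m.toNat : ℕ) : ℝ) = (m : ℝ) := by
          exact_mod_cast congrArg (fun z : ℤ => (z : ℝ)) (Int.toNat_of_nonneg hm0)
        rw [hcast]
        set t : ℝ := 2 ^ p * x - m with htdef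
        have ht0 : 0 ≤ t := by
          have := Int.floor_le ((2 : ℝ) ^ p * x); simp only [htdef]; linarith
        have ht1 : t < 1 := by
          have := Int.lt_floor_add_one ((2 : ℝ) ^ p * x); simp only [htdef]; linarith
        rw [Function.iterate_succ_apply',
          sawtooth_iter_formula p x (le_of_lt hx0) (le_of_lt hx1)]
        by_cases hEv : Even m
        · rw [if_pos hEv]
        · rw [if_neg hEv, show (1 : ℝ) - 2 ^ p * x + m = 1 - t by simp only [htdef]; ring,
            sawtooth_symm ht0 (le_of_lt ht1)]
      case side =>
        intro k hk hne
        apply sawtooth_zero_of_notIoo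
        simp only [Set.mem_Ioo, not_and_or, not_lt]
        rcases lt_or_gt_of_ne (fun h : (k : ℤ) = m => hne (by omega)) with h | h
        · right
          have hk1 : (k : ℝ) + 1 ≤ (m : ℝ) := by exact_mod_cast h
          have := Int.floor_le ((2 : ℝ) ^ p * x)
          rw [← hm] at this
          linarith
        · left
          have hk1 : (m : ℝ) + 1 ≤ (k : ℝ) := by exact_mod_cast h
          have := Int.lt_floor_add_one ((2 : ℝ) ^ p * x)
          rw [← hm] at this
          linarith
    · rw [sawtooth_iter_zero _ hs hx]
      symm
      apply Finset.sum_eq_zero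
      intro k hk
      apply sawtooth_zero_of_notIoo
      simp only [Set.mem_Ioo, not_and_or, not_lt] at hx ⊢
      rcases hx with h | h
      · left
        have : (0 : ℝ) ≤ k := Nat.cast_nonneg k
        nlinarith
      · right
        have hk1 : (k : ℝ) + 1 ≤ 2 ^ p := by
          rw [Finset.mem_range] at hk
          exact_mod_cast Nat.succ_le_of_lt hk
        nlinarith
  · intro k hk x hx
    simp only [Nat.add_sub_cancel] at *
    apply sawtooth_zero_of_notIoo
    simp only [Set.mem_Ioo, not_and_or, not_lt] at hx ⊢
    rcases hx with h | h
    · left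
      rw [le_div_iff₀ hpow] at h
      linarith
    · right
      rw [div_le_iff₀ hpow] at h
      linarith
end
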